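/- arXiv:2305.04300 — 4 statements merged into one kernel-verified Lean document; each statement's English description precedes it below -/
import Mathlib

section
/- Let α ∈ (0,1) and let g ∈ L²(ℝ²₊) be compactly supported with supp g contained in a ball of radius R. Let v be the velocity given by the Biot–Savart law applied to g, i.e. v = -∇⊥(-Δ)^{-1+α/2}g. Then ‖v₂‖_{L²(ℝ²₊)} ≤ C ‖g‖_{L²(ℝ²₊)} for some constant C > 0 depending only on α and R. -/
noncomputable section

open MeasureTheory Real Set ENNReal NNReal

/-- Points of the plane `ℝ²`. -/
abbrev Pt : Type := EuclideanSpace ℝ (Fin 2)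

/-- The point `(a, b) ∈ ℝ²`. -/
def mk2 (a b : ℝ) : Pt := (WithLp.equiv 2 (Fin 2 → ℝ)).symm ![a, b]

/-- The (open) right half-plane `ℝ²₊ = {x : x₁ > 0}`. -/
def halfPlane : Set Pt := {x | 0 < x 0}

/-- The closed right half-plane `{x : x₁ ≥ 0}`. -/
def closedHalfPlane : Set Pt := {x | 0 ≤ x 0}

/-- Reflection `ỹ = (−y₁, y₂)` across the boundary of the half-plane. -/
def reflect (y : Pt) : Pt := mk2 (-(y 0)) (y 1)

/-- Rotation by 90 degrees: `(a₁,a₂)⊥ = (−a₂,a₁)`. -/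
def perp (a : Pt) : Pt := mk2 (-(a 1)) (a 0)

/-- The α-SQG Biot–Savart kernel on the half-plane:
`(x−y)⊥/|x−y|^{2+α} − (x−ỹ)⊥/|x−ỹ|^{2+α}`. -/
def sqgKernel (α : ℝ) (x y : Pt) : Pt :=
  (‖x - y‖ ^ (2 + α))⁻¹ • perp (x - y) - (‖x - reflect y‖ ^ (2 + α))⁻¹ • perp (x - reflect y)

/-- The velocity `u = -∇⊥(-Δ)^{-1+α/2} θ` on the half-plane, via the Biot–Savart law. -/
def biotSavart (α : ℝ) (θ : Pt → ℝ) (x : Pt) : Pt :=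
  ∫ y in halfPlane, θ y • sqgKernel α x y

/-- The partial derivative `∂ᵢ f` (with junk value `0` where `f` is not differentiable). -/
def pd (i : Fin 2) (f : Pt → ℝ) (x : Pt) : ℝ :=
  fderiv ℝ f x (EuclideanSpace.single i 1)

/-! ### Auxiliary lemmas -/

section Aux

open Metric

lemma mk2_apply_zero (a b : ℝ) : mk2 a b 0 = a := by
  simp [mk2]

lemma mk2_apply_one (a b : ℝ) : mk2 a b 1 = b := by
  simp [mk2]

lemma norm_perp (a : Pt) : ‖perp a‖ = ‖a‖ := by
  rw [EuclideanSpace.norm_eq, EuclideanSpace.norm_eq, Fin.sum_univ_two, Fin.sum_univ_two]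
  simp only [perp, mk2_apply_zero, mk2_apply_one, Real.norm_eq_abs, abs_neg]
  rw [add_comm]

lemma abs_comp_le (a : Pt) : |a 1| ≤ ‖a‖ := by
  rw [EuclideanSpace.norm_eq a, Fin.sum_univ_two, ← Real.sqrt_sq_eq_abs]
  apply Real.sqrt_le_sqrt
  simp only [Real.norm_eq_abs, sq_abs]
  nlinarith [sq_nonneg (a 0)]

lemma measurableSet_halfPlane : MeasurableSet halfPlane := by
  have : Continuous fun x : Pt => x 0 := (EuclideanSpace.proj (0 : Fin 2)).continuous
  exact measurableSet_lt measurable_const this.measurable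

lemma norm_sub_le_reflect {x y : Pt} (hx : 0 ≤ x 0) (hy : 0 ≤ y 0) :
    ‖x - y‖ ≤ ‖x - reflect y‖ := by
  rw [EuclideanSpace.norm_eq, EuclideanSpace.norm_eq, Fin.sum_univ_two, Fin.sum_univ_two]
  apply Real.sqrt_le_sqrt
  simp only [PiLp.sub_apply, reflect, mk2_apply_zero, mk2_apply_one, Real.norm_eq_abs, sq_abs,
    sub_neg_eq_add]
  nlinarith [mul_nonneg hx hy]

/-- The radial kernel profile `z ↦ ‖z‖^(-s)` with values in `ℝ≥0∞`. -/
def Fker (s : ℝ) (z : Pt) : ℝ≥0∞ := (‖z‖₊ : ℝ≥0∞) ^ (-s)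

lemma measurable_Fker (s : ℝ) : Measurable (Fker s) :=
  measurable_nnnorm.coe_nnreal_ennreal.pow_const _

lemma Fker_eq_ofReal {s : ℝ} {z : Pt} (hz : z ≠ 0) :
    Fker s z = ENNReal.ofReal (‖z‖ ^ (-s)) := by
  rw [Fker, show ((‖z‖₊ : ℝ≥0∞)) = ENNReal.ofReal ‖z‖ from (ofReal_norm z).symm, ENNReal.ofReal_rpow_of_pos (norm_pos_iff.2 hz)]

lemma rpow_helper_sq (a : ℝ≥0∞) : a ^ (2:ℝ) = a * a := by
  rw [show (2:ℝ) = 1 + 1 by norm_num, ENNReal.rpow_add_of_nonneg _ _ zero_le_one zero_le_one,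
    ENNReal.rpow_one]

lemma rpow_helper_root_sq (a : ℝ≥0∞) : (a ^ (2:ℝ)) ^ ((1:ℝ)/2) = a := by
  rw [← ENNReal.rpow_mul]; norm_num

lemma rpow_helper_sq_root (a : ℝ≥0∞) : (a ^ ((1:ℝ)/2)) ^ (2:ℝ) = a := by
  rw [← ENNReal.rpow_mul]; norm_num

lemma rpow_helper_half_half (a : ℝ≥0∞) : a ^ ((1:ℝ)/2) * a ^ ((1:ℝ)/2) = a := by
  rw [← ENNReal.rpow_add_of_nonneg _ _ (by norm_num) (by norm_num)]; norm_num

lemma conj22 : Real.HolderConjugate 2 2 := by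
  exact Real.HolderConjugate.two_two

/-- Pointwise bound for the Biot–Savart kernel. -/
lemma kernel_bound {α : ℝ} (hα0 : 0 < α) {x y : Pt} (hx : 0 ≤ x 0) (hy : 0 ≤ y 0) :
    (‖sqgKernel α x y‖₊ : ℝ≥0∞) ≤ 2 * Fker (1 + α) (x - y) := by
  rcases eq_or_ne x y with rfl | hxy
  · have : Fker (1 + α) (x - x) = ⊤ := by
      rw [Fker, sub_self, nnnorm_zero, ENNReal.coe_zero,
        ENNReal.zero_rpow_of_neg (by linarith)]
    rw [this]
    simp
  · have hr : 0 < ‖x - y‖ := norm_pos_iff.2 (sub_ne_zero.2 hxy)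
    have hr' : 0 < ‖x - reflect y‖ := lt_of_lt_of_le hr (norm_sub_le_reflect hx hy)
    have hle : ‖x - y‖ ≤ ‖x - reflect y‖ := norm_sub_le_reflect hx hy
    have hterm : ∀ t : ℝ, 0 < t → ‖(t ^ (2 + α))⁻¹‖ * t = t ^ (-(1 + α)) := by
      intro t ht
      rw [Real.norm_eq_abs, abs_of_nonneg (by positivity), ← Real.rpow_neg ht.le]
      nth_rewrite 2 [← Real.rpow_one t]
      rw [← Real.rpow_add ht]
      congr 1
      ring
    have hnorm : ‖sqgKernel α x y‖ ≤ 2 * ‖x - y‖ ^ (-(1 + α)) := by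
      have h1 : ‖(‖x - y‖ ^ (2 + α))⁻¹ • perp (x - y)‖ = ‖x - y‖ ^ (-(1 + α)) := by
        rw [norm_smul, norm_perp, hterm _ hr]
      have h2 : ‖(‖x - reflect y‖ ^ (2 + α))⁻¹ • perp (x - reflect y)‖
          = ‖x - reflect y‖ ^ (-(1 + α)) := by
        rw [norm_smul, norm_perp, hterm _ hr']
      have h3 : ‖x - reflect y‖ ^ (-(1 + α)) ≤ ‖x - y‖ ^ (-(1 + α)) :=
        Real.rpow_le_rpow_of_nonpos hr hle (by linarith)
      calc ‖sqgKernel α x y‖ ≤ ‖(‖x - y‖ ^ (2 + α))⁻¹ • perp (x - y)‖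
            + ‖(‖x - reflect y‖ ^ (2 + α))⁻¹ • perp (x - reflect y)‖ := norm_sub_le _ _
        _ ≤ ‖x - y‖ ^ (-(1 + α)) + ‖x - y‖ ^ (-(1 + α)) := by
            rw [h1, h2]; exact add_le_add_right h3 _
        _ = 2 * ‖x - y‖ ^ (-(1 + α)) := by ring
    calc (‖sqgKernel α x y‖₊ : ℝ≥0∞) = ENNReal.ofReal ‖sqgKernel α x y‖ :=
          (ofReal_norm _).symm
      _ ≤ ENNReal.ofReal (2 * ‖x - y‖ ^ (-(1 + α))) := ENNReal.ofReal_le_ofReal hnorm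
      _ = 2 * ENNReal.ofReal (‖x - y‖ ^ (-(1 + α))) := by
          rw [ENNReal.ofReal_mul (by norm_num)]
          norm_num
      _ = 2 * Fker (1 + α) (x - y) := by rw [Fker_eq_ofReal (sub_ne_zero.2 hxy)]

/-- Translation invariance of the Lebesgue integral under `y ↦ x - y`. -/
lemma lintegral_sub_inv (f : Pt → ℝ≥0∞) (x : Pt) : ∫⁻ y, f (x - y) = ∫⁻ z, f z := by
  have h1 : ∀ y : Pt, f (x - y) = (fun z => f (-z)) (y - x) :=
    fun y => (congrArg f (neg_sub y x)).symm
  simp_rw [h1]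
  rw [lintegral_sub_right_eq_self (μ := volume) (fun z => f (-z)) x]
  exact (Measure.measurePreserving_neg (volume : Measure Pt)).lintegral_comp_emb
    (MeasurableEquiv.neg Pt).measurableEmbedding f

/-- Finiteness of the near part of the kernel. -/
lemma near_finite {s : ℝ} (hs0 : 0 < s) (hs2 : s < 2) :
    ∫⁻ z in closedBall (0:Pt) 1, Fker s z < ⊤ := by
  set μ := (volume : Measure Pt).restrict (closedBall (0:Pt) 1) with hμ
  have hfm : Measurable fun z : Pt => ‖z‖ ^ (-s) := by fun_prop
  have h0 : ∀ᵐ z ∂μ, Fker s z = ENNReal.ofReal (‖z‖ ^ (-s)) := by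
    have hne : ∀ᵐ z : Pt ∂μ, z ≠ 0 := by
      refine ae_restrict_of_ae ?_
      rw [ae_iff]
      have : {z : Pt | ¬ z ≠ 0} = {0} := by ext z; simp
      rw [this]
      exact measure_singleton 0
    filter_upwards [hne] with z hz
    exact Fker_eq_ofReal hz
  rw [lintegral_congr_ae h0, lintegral_eq_lintegral_meas_le μ
    (ae_of_all _ fun z => Real.rpow_nonneg (norm_nonneg _) _) hfm.aemeasurable]
  set Vb := volume (ball (0:Pt) 1) with hVb
  have hVbfin : Vb ≠ ⊤ := measure_ball_lt_top.ne
  have hV1fin : volume (closedBall (0:Pt) 1) ≠ ⊤ := measure_closedBall_lt_top.ne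
  have htail : ∀ t : ℝ, 0 < t →
      μ {a : Pt | t ≤ ‖a‖ ^ (-s)} ≤ ENNReal.ofReal ((t ^ (-s⁻¹)) ^ (2:ℕ)) * Vb := by
    intro t ht
    have hsub : {a : Pt | t ≤ ‖a‖ ^ (-s)} ⊆ closedBall 0 (t ^ (-s⁻¹)) := by
      intro a ha
      simp only [mem_setOf_eq] at ha
      rcases eq_or_ne a 0 with rfl | h0
      · exfalso
        rw [norm_zero, Real.zero_rpow (neg_ne_zero.2 hs0.ne')] at ha
        linarith
      · have hn : 0 < ‖a‖ := norm_pos_iff.2 h0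
        rw [mem_closedBall, dist_zero_right]
        have hmono := Real.rpow_le_rpow_of_nonpos ht ha
          (neg_nonpos.2 (inv_nonneg.2 hs0.le))
        rw [← Real.rpow_mul hn.le] at hmono
        rw [show -s * -s⁻¹ = 1 by field_simp] at hmono
        rwa [Real.rpow_one] at hmono
    calc μ {a : Pt | t ≤ ‖a‖ ^ (-s)} ≤ μ (closedBall 0 (t ^ (-s⁻¹))) := measure_mono hsub
      _ ≤ volume (closedBall (0:Pt) (t ^ (-s⁻¹))) := by
          rw [hμ, Measure.restrict_apply' measurableSet_closedBall]
          exact measure_mono inter_subset_left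
      _ = ENNReal.ofReal ((t ^ (-s⁻¹)) ^ Module.finrank ℝ Pt) * Vb :=
          Measure.addHaar_closedBall _ _ (Real.rpow_nonneg ht.le _)
      _ = ENNReal.ofReal ((t ^ (-s⁻¹)) ^ (2:ℕ)) * Vb := by
          rw [finrank_euclideanSpace_fin]
  have hV1bound : ∀ t : ℝ, 0 < t →
      μ {a : Pt | t ≤ ‖a‖ ^ (-s)} ≤ volume (closedBall (0:Pt) 1) := by
    intro t _
    calc μ {a : Pt | t ≤ ‖a‖ ^ (-s)} ≤ μ univ := measure_mono (subset_univ _)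
      _ = volume (closedBall (0:Pt) 1) := Measure.restrict_apply_univ _
  rw [← Ioc_union_Ioi_eq_Ioi (zero_le_one (α := ℝ)),
    lintegral_union measurableSet_Ioi (Set.Ioc_disjoint_Ioi le_rfl)]
  apply ENNReal.add_lt_top.2
  constructor
  · calc ∫⁻ t in Ioc (0:ℝ) 1, μ {a : Pt | t ≤ ‖a‖ ^ (-s)}
        ≤ ∫⁻ _ in Ioc (0:ℝ) 1, volume (closedBall (0:Pt) 1) :=
          setLIntegral_mono' measurableSet_Ioc fun t ht => hV1bound t ht.1
      _ = volume (closedBall (0:Pt) 1) * volume (Ioc (0:ℝ) 1) := by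
          rw [lintegral_const, Measure.restrict_apply_univ]
      _ < ⊤ := by
          apply ENNReal.mul_lt_top hV1fin.lt_top
          simp [Real.volume_Ioc]
  · have he : -s⁻¹ * (2:ℕ) < -1 := by
      have h1 : (1:ℝ) < s⁻¹ * 2 := by
        rw [← div_eq_inv_mul]
        exact (one_lt_div hs0).2 hs2
      push_cast
      linarith
    have hint : IntegrableOn (fun t : ℝ => t ^ (-s⁻¹ * (2:ℕ))) (Ioi (1:ℝ)) volume :=
      integrableOn_Ioi_rpow_of_lt he one_pos
    have hfin : ∫⁻ t in Ioi (1:ℝ), ENNReal.ofReal (t ^ (-s⁻¹ * (2:ℕ))) < ⊤ := by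
      refine lt_of_le_of_lt (lintegral_mono fun t => ?_) hint.2
      exact Real.ofReal_le_enorm _
    calc ∫⁻ t in Ioi (1:ℝ), μ {a : Pt | t ≤ ‖a‖ ^ (-s)}
        ≤ ∫⁻ t in Ioi (1:ℝ), ENNReal.ofReal (t ^ (-s⁻¹ * (2:ℕ))) * Vb := by
          refine setLIntegral_mono' measurableSet_Ioi fun t ht => ?_
          have ht0 : (0:ℝ) < t := lt_trans one_pos ht
          refine le_trans (htail t ht0) ?_
          rw [← Real.rpow_natCast (t ^ (-s⁻¹)) 2, ← Real.rpow_mul ht0.le]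
      _ = (∫⁻ t in Ioi (1:ℝ), ENNReal.ofReal (t ^ (-s⁻¹ * (2:ℕ)))) * Vb :=
          lintegral_mul_const' _ _ hVbfin
      _ < ⊤ := ENNReal.mul_lt_top hfin hVbfin.lt_top

/-- Finiteness of the square of the far part of the kernel. -/
lemma far_finite {r : ℝ} (h2 : 2 < r) :
    ∫⁻ z in (closedBall (0:Pt) 1)ᶜ, Fker r z < ⊤ := by
  have hr0 : 0 < r := by linarith
  have hbound : ∀ z : Pt, z ∈ (closedBall (0:Pt) 1)ᶜ →
      Fker r z ≤ ENNReal.ofReal (2 ^ r) * ENNReal.ofReal ((1 + ‖z‖) ^ (-r)) := by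
    intro z hz
    have h1 : 1 < ‖z‖ := by
      simp only [mem_compl_iff, mem_closedBall, dist_zero_right, not_le] at hz
      exact hz
    have hz0 : z ≠ 0 := by
      intro h; rw [h, norm_zero] at h1; linarith
    rw [Fker_eq_ofReal hz0, ← ENNReal.ofReal_mul (by positivity)]
    apply ENNReal.ofReal_le_ofReal
    have hhalf : (1 + ‖z‖) / 2 ≤ ‖z‖ := by linarith
    have hhalfpos : 0 < (1 + ‖z‖) / 2 := by linarith
    calc ‖z‖ ^ (-r) ≤ ((1 + ‖z‖) / 2) ^ (-r) :=
          Real.rpow_le_rpow_of_nonpos hhalfpos hhalf (by linarith)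
      _ = (1 + ‖z‖) ^ (-r) / 2 ^ (-r) := Real.div_rpow (by linarith) (by norm_num) _
      _ = 2 ^ r * (1 + ‖z‖) ^ (-r) := by
          rw [Real.rpow_neg (by norm_num : (0:ℝ) ≤ 2), div_eq_mul_inv, inv_inv, mul_comm]
  calc ∫⁻ z in (closedBall (0:Pt) 1)ᶜ, Fker r z
      ≤ ∫⁻ z in (closedBall (0:Pt) 1)ᶜ,
          ENNReal.ofReal (2 ^ r) * ENNReal.ofReal ((1 + ‖z‖) ^ (-r)) :=
        setLIntegral_mono' measurableSet_closedBall.compl hbound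
    _ ≤ ∫⁻ z : Pt, ENNReal.ofReal (2 ^ r) * ENNReal.ofReal ((1 + ‖z‖) ^ (-r)) :=
        setLIntegral_le_lintegral _ _
    _ = ENNReal.ofReal (2 ^ r) * ∫⁻ z : Pt, ENNReal.ofReal ((1 + ‖z‖) ^ (-r)) :=
        lintegral_const_mul' _ _ ENNReal.ofReal_ne_top
    _ < ⊤ := by
        apply ENNReal.mul_lt_top ENNReal.ofReal_lt_top
        apply finite_integral_one_add_norm
        rw [finrank_euclideanSpace_fin]
        exact_mod_cast h2

/-- Schur-type estimate for the near (integrable) part: `‖F ⋆ G‖₂ ≤ ‖F‖₁ ‖G‖₂`. -/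
lemma schur_near {F G : Pt → ℝ≥0∞} (hF : Measurable F) (hG : Measurable G) :
    ∫⁻ x, (∫⁻ y, F (x - y) * G y) ^ (2:ℝ)
      ≤ (∫⁻ z, F z) ^ (2:ℝ) * ∫⁻ y, G y ^ (2:ℝ) := by
  set A := ∫⁻ z, F z with hA
  have hFx : ∀ x : Pt, Measurable fun y : Pt => F (x - y) :=
    fun x => hF.comp (measurable_const.sub measurable_id)
  have hFy : ∀ y : Pt, Measurable fun x : Pt => F (x - y) :=
    fun y => hF.comp (measurable_id.sub measurable_const)
  have key : ∀ x : Pt, (∫⁻ y, F (x - y) * G y) ^ (2:ℝ)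
      ≤ A * ∫⁻ y, F (x - y) * G y ^ (2:ℝ) := by
    intro x
    have hcs := ENNReal.lintegral_mul_le_Lp_mul_Lq (volume : Measure Pt) conj22
      (f := fun y => F (x - y) ^ ((1:ℝ)/2)) (g := fun y => F (x - y) ^ ((1:ℝ)/2) * G y)
      ((hFx x).pow_const _).aemeasurable (((hFx x).pow_const _).mul hG).aemeasurable
    have hlhs : (fun y => ((fun y => F (x - y) ^ ((1:ℝ)/2)) * fun y => F (x - y) ^ ((1:ℝ)/2) * G y) y)
        = fun y => F (x - y) * G y := by
      funext y
      simp only [Pi.mul_apply]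
      rw [← mul_assoc, rpow_helper_half_half]
    rw [hlhs] at hcs
    have hr1 : ∫⁻ y, (F (x - y) ^ ((1:ℝ)/2)) ^ (2:ℝ) = A := by
      simp_rw [rpow_helper_sq_root]
      rw [lintegral_sub_inv F x]
    have hr2 : (fun y => (F (x - y) ^ ((1:ℝ)/2) * G y) ^ (2:ℝ))
        = fun y => F (x - y) * G y ^ (2:ℝ) := by
      funext y
      rw [ENNReal.mul_rpow_of_nonneg _ _ (by norm_num), rpow_helper_sq_root]
    simp_rw [one_div] at hcs hr1 hr2 ⊢
    rw [hr1, hr2] at hcs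
    calc (∫⁻ y, F (x - y) * G y) ^ (2:ℝ)
        ≤ (A ^ (2:ℝ)⁻¹ * (∫⁻ y, F (x - y) * G y ^ (2:ℝ)) ^ (2:ℝ)⁻¹) ^ (2:ℝ) :=
          ENNReal.rpow_le_rpow hcs (by norm_num)
      _ = A * ∫⁻ y, F (x - y) * G y ^ (2:ℝ) := by
          rw [ENNReal.mul_rpow_of_nonneg _ _ (by norm_num : (0:ℝ) ≤ 2)]
          have e1 : (A ^ (2:ℝ)⁻¹) ^ (2:ℝ) = A := by
            have := rpow_helper_sq_root A
            rwa [one_div] at this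
          have e2 : ((∫⁻ y, F (x - y) * G y ^ (2:ℝ)) ^ (2:ℝ)⁻¹) ^ (2:ℝ)
              = ∫⁻ y, F (x - y) * G y ^ (2:ℝ) := by
            have := rpow_helper_sq_root (∫⁻ y, F (x - y) * G y ^ (2:ℝ))
            rwa [one_div] at this
          rw [e1, e2]
  have hSmeas : Measurable fun x : Pt => ∫⁻ y, F (x - y) * G y ^ (2:ℝ) := by
    apply Measurable.lintegral_prod_right
    exact (hF.comp (measurable_fst.sub measurable_snd)).mul
      ((hG.comp measurable_snd).pow_const _)
  calc ∫⁻ x, (∫⁻ y, F (x - y) * G y) ^ (2:ℝ)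
      ≤ ∫⁻ x, A * ∫⁻ y, F (x - y) * G y ^ (2:ℝ) := lintegral_mono key
    _ = A * ∫⁻ x, ∫⁻ y, F (x - y) * G y ^ (2:ℝ) := lintegral_const_mul A hSmeas
    _ = A * ∫⁻ y, ∫⁻ x, F (x - y) * G y ^ (2:ℝ) := by
        rw [lintegral_lintegral_swap]
        exact ((hF.comp (measurable_fst.sub measurable_snd)).mul
          ((hG.comp measurable_snd).pow_const _)).aemeasurable
    _ = A * ∫⁻ y, A * G y ^ (2:ℝ) := by
        congr 1
        refine lintegral_congr fun y => ?_
        rw [lintegral_mul_const _ (hFy y), lintegral_sub_right_eq_self (μ := volume) F y, mul_comm]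
    _ = A * (A * ∫⁻ y, G y ^ (2:ℝ)) := by
        rw [lintegral_const_mul A (hG.pow_const _)]
    _ = A ^ (2:ℝ) * ∫⁻ y, G y ^ (2:ℝ) := by
        rw [rpow_helper_sq]; ring

/-- Schur-type estimate for the far (square-integrable) part: `‖F ⋆ G‖₂ ≤ ‖F‖₂ ‖G‖₁`. -/
lemma schur_far {F G : Pt → ℝ≥0∞} (hF : Measurable F) (hG : Measurable G) :
    ∫⁻ x, (∫⁻ y, F (x - y) * G y) ^ (2:ℝ)
      ≤ (∫⁻ z, F z ^ (2:ℝ)) * (∫⁻ y, G y) ^ (2:ℝ) := by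
  set B2 := ∫⁻ z, F z ^ (2:ℝ) with hB2
  set W := ∫⁻ y, G y with hW
  have hFy : ∀ y : Pt, Measurable fun x : Pt => F (x - y) :=
    fun y => hF.comp (measurable_id.sub measurable_const)
  have hFx : ∀ x : Pt, Measurable fun y : Pt => F (x - y) :=
    fun x => hF.comp (measurable_const.sub measurable_id)
  have key : ∀ x : Pt, (∫⁻ y, F (x - y) * G y) ^ (2:ℝ)
      ≤ (∫⁻ y, F (x - y) ^ (2:ℝ) * G y) * W := by
    intro x
    have hcs := ENNReal.lintegral_mul_le_Lp_mul_Lq (volume : Measure Pt) conj22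
      (f := fun y => F (x - y) * G y ^ ((1:ℝ)/2)) (g := fun y => G y ^ ((1:ℝ)/2))
      ((hFx x).mul (hG.pow_const _)).aemeasurable (hG.pow_const _).aemeasurable
    have hlhs : (fun y => ((fun y => F (x - y) * G y ^ ((1:ℝ)/2)) * fun y => G y ^ ((1:ℝ)/2)) y)
        = fun y => F (x - y) * G y := by
      funext y
      simp only [Pi.mul_apply]
      rw [mul_assoc, rpow_helper_half_half]
    rw [hlhs] at hcs
    have hr1 : (fun y => (F (x - y) * G y ^ ((1:ℝ)/2)) ^ (2:ℝ))
        = fun y => F (x - y) ^ (2:ℝ) * G y := by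
      funext y
      rw [ENNReal.mul_rpow_of_nonneg _ _ (by norm_num), rpow_helper_sq_root]
    have hr2 : ∫⁻ y, (G y ^ ((1:ℝ)/2)) ^ (2:ℝ) = W := by
      simp_rw [rpow_helper_sq_root]
      exact hW.symm
    simp_rw [one_div] at hcs hr1 hr2 ⊢
    rw [hr1, hr2] at hcs
    calc (∫⁻ y, F (x - y) * G y) ^ (2:ℝ)
        ≤ ((∫⁻ y, F (x - y) ^ (2:ℝ) * G y) ^ (2:ℝ)⁻¹ * W ^ (2:ℝ)⁻¹) ^ (2:ℝ) :=
          ENNReal.rpow_le_rpow hcs (by norm_num)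
      _ = (∫⁻ y, F (x - y) ^ (2:ℝ) * G y) * W := by
          rw [ENNReal.mul_rpow_of_nonneg _ _ (by norm_num : (0:ℝ) ≤ 2)]
          have e1 : ((∫⁻ y, F (x - y) ^ (2:ℝ) * G y) ^ (2:ℝ)⁻¹) ^ (2:ℝ)
              = ∫⁻ y, F (x - y) ^ (2:ℝ) * G y := by
            have := rpow_helper_sq_root (∫⁻ y, F (x - y) ^ (2:ℝ) * G y)
            rwa [one_div] at this
          have e2 : (W ^ (2:ℝ)⁻¹) ^ (2:ℝ) = W := by
            have := rpow_helper_sq_root W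
            rwa [one_div] at this
          rw [e1, e2]
  have hSmeas : Measurable fun x : Pt => ∫⁻ y, F (x - y) ^ (2:ℝ) * G y := by
    apply Measurable.lintegral_prod_right
    exact ((hF.comp (measurable_fst.sub measurable_snd)).pow_const _).mul (hG.comp measurable_snd)
  calc ∫⁻ x, (∫⁻ y, F (x - y) * G y) ^ (2:ℝ)
      ≤ ∫⁻ x, (∫⁻ y, F (x - y) ^ (2:ℝ) * G y) * W := lintegral_mono key
    _ = (∫⁻ x, ∫⁻ y, F (x - y) ^ (2:ℝ) * G y) * W := lintegral_mul_const W hSmeas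
    _ = (∫⁻ y, ∫⁻ x, F (x - y) ^ (2:ℝ) * G y) * W := by
        congr 1
        rw [lintegral_lintegral_swap]
        exact (((hF.comp (measurable_fst.sub measurable_snd)).pow_const _).mul
          (hG.comp measurable_snd)).aemeasurable
    _ = (∫⁻ y, B2 * G y) * W := by
        congr 1
        refine lintegral_congr fun y => ?_
        rw [lintegral_mul_const _ ((hFy y).pow_const _),
          lintegral_sub_right_eq_self (μ := volume) (fun z => F z ^ (2:ℝ)) y, mul_comm]
    _ = B2 * W * W := by rw [lintegral_const_mul B2 hG]
    _ = B2 * W ^ (2:ℝ) := by rw [rpow_helper_sq]; ring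

end Aux

/-- **`L²` estimate for the second velocity component** (Lemma 2.3, (2.6)): for
compactly supported `g ∈ L²(ℝ²₊)`, the Biot–Savart velocity satisfies
`‖v₂‖_{L²} ≤ C ‖g‖_{L²}`, with `C` depending only on `α` and the radius `R` of a ball
containing the support of `g`. -/
theorem velocity_second_component_L2 (α : ℝ) (hα0 : 0 < α) (hα1 : α < 1) (R : ℝ)
    (hR : 0 < R) :
    ∃ C : ℝ, 0 < C ∧
      ∀ g : Pt → ℝ,
        MemLp g 2 ((volume : Measure Pt).restrict halfPlane) →
        (∃ c : Pt, closedHalfPlane ∩ Function.support g ⊆ Metric.closedBall c R) →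
        eLpNorm (fun x => biotSavart α g x 1) 2 ((volume : Measure Pt).restrict halfPlane)
          ≤ ENNReal.ofReal C * eLpNorm g 2 ((volume : Measure Pt).restrict halfPlane) := by
  classical
  set μh := (volume : Measure Pt).restrict halfPlane with hμh
  set Fs := Fker (1 + α) with hFs
  set F₁ := (Metric.closedBall (0:Pt) 1).indicator Fs with hF₁
  set F₂ := ((Metric.closedBall (0:Pt) 1)ᶜ).indicator Fs with hF₂
  have hF₁m : Measurable F₁ := (measurable_Fker _).indicator Metric.isClosed_closedBall.measurableSet
  have hF₂m : Measurable F₂ :=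
    (measurable_Fker _).indicator Metric.isClosed_closedBall.measurableSet.compl
  set A := ∫⁻ z, F₁ z with hA
  set B2 := ∫⁻ z, F₂ z ^ (2:ℝ) with hB2
  set VR := volume (Metric.closedBall (0:Pt) R) with hVR
  have hAfin : A ≠ ⊤ := by
    rw [hA, hF₁, lintegral_indicator Metric.isClosed_closedBall.measurableSet]
    exact (near_finite (by linarith) (by linarith)).ne
  have hB2fin : B2 ≠ ⊤ := by
    have hpt : ∀ z : Pt, F₂ z ^ (2:ℝ)
        = ((Metric.closedBall (0:Pt) 1)ᶜ).indicator (Fker (2 + 2*α)) z := by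
      intro z
      by_cases hz : z ∈ (Metric.closedBall (0:Pt) 1)ᶜ
      · rw [hF₂, Set.indicator_of_mem hz, Set.indicator_of_mem hz, hFs, Fker, Fker,
          ← ENNReal.rpow_mul]
        norm_num
        ring_nf
      · rw [hF₂, Set.indicator_of_notMem hz, Set.indicator_of_notMem hz,
          ENNReal.zero_rpow_of_pos (by norm_num)]
    rw [hB2]
    simp_rw [hpt]
    rw [lintegral_indicator Metric.isClosed_closedBall.measurableSet.compl]
    exact (far_finite (by linarith)).ne
  have hVRfin : VR ≠ ⊤ := measure_closedBall_lt_top.ne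
  set K : ℝ≥0∞ := 2 * (A + B2 ^ ((1:ℝ)/2) * VR ^ ((1:ℝ)/2)) with hK
  have hKfin : K ≠ ⊤ := by
    apply ENNReal.mul_ne_top (by norm_num)
    apply ENNReal.add_ne_top.2
    exact ⟨hAfin, ENNReal.mul_ne_top (ENNReal.rpow_ne_top_of_nonneg (by norm_num) hB2fin)
      (ENNReal.rpow_ne_top_of_nonneg (by norm_num) hVRfin)⟩
  refine ⟨K.toReal + 1, by positivity, ?_⟩
  intro g hg hsupp
  obtain ⟨c, hsupp⟩ := hsupp
  set E := eLpNorm g 2 μh with hE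
  -- measurable representative of g
  set g' := hg.1.mk g with hg'
  have hg'm : StronglyMeasurable g' := hg.1.stronglyMeasurable_mk
  have hgg' : g =ᵐ[μh] g' := hg.1.ae_eq_mk
  set S := halfPlane ∩ Metric.closedBall c R with hS
  have hSm : MeasurableSet S :=
    measurableSet_halfPlane.inter Metric.isClosed_closedBall.measurableSet
  set G := S.indicator fun y => (‖g' y‖₊ : ℝ≥0∞) with hG
  have hGm : Measurable G := hg'm.measurable.enorm.indicator hSm
  set J := ∫⁻ y, G y ^ (2:ℝ) with hJ
  set W := ∫⁻ y, G y with hW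
  -- J is controlled by the L² norm of g
  have hJeq : J = ∫⁻ y in S, (‖g' y‖₊ : ℝ≥0∞) ^ (2:ℝ) := by
    rw [hJ]
    have : ∀ y : Pt, G y ^ (2:ℝ) = S.indicator (fun y => (‖g' y‖₊ : ℝ≥0∞) ^ (2:ℝ)) y := by
      intro y
      by_cases hy : y ∈ S
      · rw [hG, Set.indicator_of_mem hy, Set.indicator_of_mem hy]
      · rw [hG, Set.indicator_of_notMem hy, Set.indicator_of_notMem hy,
          ENNReal.zero_rpow_of_pos (by norm_num)]
    simp_rw [this]
    exact lintegral_indicator hSm _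
  have hJle : J ≤ ∫⁻ y in halfPlane, (‖g y‖₊ : ℝ≥0∞) ^ (2:ℝ) := by
    rw [hJeq]
    calc ∫⁻ y in S, (‖g' y‖₊ : ℝ≥0∞) ^ (2:ℝ)
        ≤ ∫⁻ y in halfPlane, (‖g' y‖₊ : ℝ≥0∞) ^ (2:ℝ) :=
          lintegral_mono' (Measure.restrict_mono inter_subset_left le_rfl) le_rfl
      _ = ∫⁻ y in halfPlane, (‖g y‖₊ : ℝ≥0∞) ^ (2:ℝ) := by
          refine lintegral_congr_ae ?_
          filter_upwards [hgg'] with y hy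
          rw [hy]
  have hEeq : E = (∫⁻ y in halfPlane, (‖g y‖₊ : ℝ≥0∞) ^ (2:ℝ)) ^ ((1:ℝ)/2) := by
    rw [hE, eLpNorm_eq_lintegral_rpow_enorm_toReal (by norm_num) (by norm_num), hμh]
    norm_num
    rfl
  have hJE : J ^ ((1:ℝ)/2) ≤ E := by
    rw [hEeq]
    exact ENNReal.rpow_le_rpow hJle (by norm_num)
  -- W is controlled via Cauchy-Schwarz
  have hWle : W ≤ J ^ ((1:ℝ)/2) * VR ^ ((1:ℝ)/2) := by
    have hcs := ENNReal.lintegral_mul_le_Lp_mul_Lq (volume.restrict S) conj22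
      (f := fun y => (‖g' y‖₊ : ℝ≥0∞)) (g := fun _ => (1:ℝ≥0∞))
      hg'm.measurable.enorm.aemeasurable aemeasurable_const
    simp only [Pi.mul_apply, mul_one, ENNReal.one_rpow, lintegral_one,
      Measure.restrict_apply_univ] at hcs
    have hWeq : W = ∫⁻ y in S, (‖g' y‖₊ : ℝ≥0∞) := by
      rw [hW, hG, lintegral_indicator hSm]
    calc W ≤ (∫⁻ y in S, (‖g' y‖₊ : ℝ≥0∞) ^ (2:ℝ)) ^ ((1:ℝ)/2) * volume S ^ ((1:ℝ)/2) := by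
          rw [hWeq]
          simpa [one_div] using hcs
      _ ≤ J ^ ((1:ℝ)/2) * VR ^ ((1:ℝ)/2) := by
          rw [hJeq]
          apply mul_le_mul_right
          refine ENNReal.rpow_le_rpow ?_ (by norm_num)
          rw [hVR]
          calc volume S ≤ volume (Metric.closedBall c R) := measure_mono inter_subset_right
            _ = volume (Metric.closedBall (0:Pt) R) :=
              Measure.addHaar_closedBall_center _ _ _
  -- pointwise bound on the velocity
  set H := fun x : Pt => ∫⁻ y, Fs (x - y) * G y with hH
  have hHm : Measurable H := by
    apply Measurable.lintegral_prod_right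
    exact ((measurable_Fker _).comp (measurable_fst.sub measurable_snd)).mul
      (hGm.comp measurable_snd)
  have hkey : ∀ x : Pt, x ∈ halfPlane → (‖biotSavart α g x 1‖₊ : ℝ≥0∞) ≤ 2 * H x := by
    intro x hx
    have hx0 : 0 ≤ x 0 := le_of_lt hx
    have step1 : (‖biotSavart α g x 1‖₊ : ℝ≥0∞) ≤ (‖biotSavart α g x‖₊ : ℝ≥0∞) := by
      apply ENNReal.coe_le_coe.2
      have h := abs_comp_le (biotSavart α g x)
      rw [← Real.norm_eq_abs] at h
      exact_mod_cast h
    have step2 : (‖biotSavart α g x‖₊ : ℝ≥0∞)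
        ≤ ∫⁻ y in halfPlane, (‖g y • sqgKernel α x y‖₊ : ℝ≥0∞) :=
      enorm_integral_le_lintegral_enorm _
    have step3 : ∫⁻ y in halfPlane, (‖g y • sqgKernel α x y‖₊ : ℝ≥0∞)
        ≤ ∫⁻ y in halfPlane, 2 * (Fs (x - y) * G y) := by
      apply lintegral_mono_ae
      filter_upwards [hgg', ae_restrict_mem measurableSet_halfPlane] with y hy1 hy2
      have hy0 : 0 ≤ y 0 := le_of_lt hy2
      rw [nnnorm_smul, ENNReal.coe_mul]
      by_cases hyball : y ∈ Metric.closedBall c R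
      · have hyS : y ∈ S := ⟨hy2, hyball⟩
        have hGy : G y = (‖g' y‖₊ : ℝ≥0∞) := Set.indicator_of_mem hyS _
        calc (‖g y‖₊ : ℝ≥0∞) * (‖sqgKernel α x y‖₊ : ℝ≥0∞)
            ≤ (‖g y‖₊ : ℝ≥0∞) * (2 * Fker (1 + α) (x - y)) :=
              mul_le_mul_right (kernel_bound hα0 hx0 hy0) _
          _ = 2 * (Fs (x - y) * G y) := by
              rw [hGy, ← hy1, hFs]; ring
      · have hgy : g y = 0 := by
          by_contra hne
          have hyH : y ∈ closedHalfPlane := by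
            simp only [closedHalfPlane, Set.mem_setOf_eq]
            exact le_of_lt hy2
          exact hyball (hsupp ⟨hyH, hne⟩)
        rw [hgy]
        simp
    have step4 : ∫⁻ y in halfPlane, 2 * (Fs (x - y) * G y) ≤ 2 * H x := by
      calc ∫⁻ y in halfPlane, 2 * (Fs (x - y) * G y)
          ≤ ∫⁻ y, 2 * (Fs (x - y) * G y) := setLIntegral_le_lintegral _ _
        _ = 2 * H x := lintegral_const_mul' _ _ (by norm_num)
    exact le_trans step1 (le_trans step2 (le_trans step3 step4))
  -- assemble the L² estimate
  have hsplit : ∀ x : Pt, H x = (∫⁻ y, F₁ (x - y) * G y) + ∫⁻ y, F₂ (x - y) * G y := by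
    intro x
    rw [hH]
    have : ∀ y : Pt, Fs (x - y) * G y = F₁ (x - y) * G y + F₂ (x - y) * G y := by
      intro y
      have := congrFun (Set.indicator_self_add_compl (Metric.closedBall (0:Pt) 1) Fs) (x - y)
      simp only [Pi.add_apply] at this
      rw [hF₁, hF₂, ← add_mul, this]
    simp_rw [this]
    exact lintegral_add_left ((hF₁m.comp (measurable_const.sub measurable_id)).mul hGm) _
  set T₁ := fun x : Pt => ∫⁻ y, F₁ (x - y) * G y with hT₁
  set T₂ := fun x : Pt => ∫⁻ y, F₂ (x - y) * G y with hT₂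
  have hT₁m : Measurable T₁ := by
    apply Measurable.lintegral_prod_right
    exact (hF₁m.comp (measurable_fst.sub measurable_snd)).mul (hGm.comp measurable_snd)
  have hT₂m : Measurable T₂ := by
    apply Measurable.lintegral_prod_right
    exact (hF₂m.comp (measurable_fst.sub measurable_snd)).mul (hGm.comp measurable_snd)
  have hmink : (∫⁻ x, H x ^ (2:ℝ)) ^ ((1:ℝ)/2)
      ≤ (∫⁻ x, T₁ x ^ (2:ℝ)) ^ ((1:ℝ)/2) + (∫⁻ x, T₂ x ^ (2:ℝ)) ^ ((1:ℝ)/2) := by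
    have : ∀ x : Pt, H x = (T₁ + T₂) x := fun x => hsplit x
    simp_rw [this]
    exact ENNReal.lintegral_Lp_add_le hT₁m.aemeasurable hT₂m.aemeasurable one_le_two
  have hbound1 : (∫⁻ x, T₁ x ^ (2:ℝ)) ^ ((1:ℝ)/2) ≤ A * J ^ ((1:ℝ)/2) := by
    have := schur_near hF₁m hGm
    calc (∫⁻ x, T₁ x ^ (2:ℝ)) ^ ((1:ℝ)/2)
        ≤ (A ^ (2:ℝ) * J) ^ ((1:ℝ)/2) := ENNReal.rpow_le_rpow this (by norm_num)
      _ = A * J ^ ((1:ℝ)/2) := by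
          rw [ENNReal.mul_rpow_of_nonneg _ _ (by norm_num : (0:ℝ) ≤ 1/2),
            rpow_helper_root_sq]
  have hbound2 : (∫⁻ x, T₂ x ^ (2:ℝ)) ^ ((1:ℝ)/2) ≤ B2 ^ ((1:ℝ)/2) * W := by
    have := schur_far hF₂m hGm
    calc (∫⁻ x, T₂ x ^ (2:ℝ)) ^ ((1:ℝ)/2)
        ≤ (B2 * W ^ (2:ℝ)) ^ ((1:ℝ)/2) := ENNReal.rpow_le_rpow this (by norm_num)
      _ = B2 ^ ((1:ℝ)/2) * W := by
          rw [ENNReal.mul_rpow_of_nonneg _ _ (by norm_num : (0:ℝ) ≤ 1/2),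
            rpow_helper_root_sq]
  have hvel : eLpNorm (fun x => biotSavart α g x 1) 2 μh
      ≤ 2 * ((∫⁻ x, H x ^ (2:ℝ)) ^ ((1:ℝ)/2)) := by
    rw [eLpNorm_eq_lintegral_rpow_enorm_toReal (by norm_num) (by norm_num)]
    have h2 : ∫⁻ x, (‖biotSavart α g x 1‖₊ : ℝ≥0∞) ^ (2:ℝ) ∂μh
        ≤ ∫⁻ x, (2 * H x) ^ (2:ℝ) := by
      calc ∫⁻ x, (‖biotSavart α g x 1‖₊ : ℝ≥0∞) ^ (2:ℝ) ∂μh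
          ≤ ∫⁻ x, (2 * H x) ^ (2:ℝ) ∂μh := by
            apply lintegral_mono_ae
            rw [hμh]
            filter_upwards [ae_restrict_mem measurableSet_halfPlane] with x hx
            exact ENNReal.rpow_le_rpow (hkey x hx) (by norm_num)
        _ ≤ ∫⁻ x, (2 * H x) ^ (2:ℝ) := by rw [hμh]; exact setLIntegral_le_lintegral _ _
    have h3 : ∫⁻ x, (2 * H x) ^ (2:ℝ) = (2:ℝ≥0∞) ^ (2:ℝ) * ∫⁻ x, H x ^ (2:ℝ) := by
      have : ∀ x : Pt, (2 * H x) ^ (2:ℝ) = (2:ℝ≥0∞) ^ (2:ℝ) * H x ^ (2:ℝ) := by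
        intro x
        rw [ENNReal.mul_rpow_of_nonneg _ _ (by norm_num : (0:ℝ) ≤ 2)]
      simp_rw [this]
      exact lintegral_const_mul' _ _ (by norm_num)
    calc (∫⁻ x, (‖biotSavart α g x 1‖₊ : ℝ≥0∞) ^ ((2:ℝ≥0∞)).toReal ∂μh)
          ^ (1 / ((2:ℝ≥0∞)).toReal)
        = (∫⁻ x, (‖biotSavart α g x 1‖₊ : ℝ≥0∞) ^ (2:ℝ) ∂μh) ^ ((1:ℝ)/2) := by
          norm_num
      _ ≤ (∫⁻ x, (2 * H x) ^ (2:ℝ)) ^ ((1:ℝ)/2) := ENNReal.rpow_le_rpow h2 (by norm_num)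
      _ = ((2:ℝ≥0∞) ^ (2:ℝ) * ∫⁻ x, H x ^ (2:ℝ)) ^ ((1:ℝ)/2) := by rw [h3]
      _ = 2 * ((∫⁻ x, H x ^ (2:ℝ)) ^ ((1:ℝ)/2)) := by
          rw [ENNReal.mul_rpow_of_nonneg _ _ (by norm_num : (0:ℝ) ≤ 1/2),
            rpow_helper_root_sq]
  have hmain : eLpNorm (fun x => biotSavart α g x 1) 2 μh ≤ K * E := by
    calc eLpNorm (fun x => biotSavart α g x 1) 2 μh
        ≤ 2 * ((∫⁻ x, H x ^ (2:ℝ)) ^ ((1:ℝ)/2)) := hvel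
      _ ≤ 2 * ((A * J ^ ((1:ℝ)/2)) + B2 ^ ((1:ℝ)/2) * W) := by
          apply mul_le_mul_right
          exact le_trans hmink (add_le_add hbound1 hbound2)
      _ ≤ 2 * ((A * E) + B2 ^ ((1:ℝ)/2) * (J ^ ((1:ℝ)/2) * VR ^ ((1:ℝ)/2))) := by
          apply mul_le_mul_right
          apply add_le_add
          · exact mul_le_mul_right hJE _
          · exact mul_le_mul_right hWle _
      _ ≤ 2 * ((A * E) + B2 ^ ((1:ℝ)/2) * (E * VR ^ ((1:ℝ)/2))) := by
          apply mul_le_mul_right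
          apply add_le_add_right
          exact mul_le_mul_right (mul_le_mul_left hJE _) _
      _ = K * E := by rw [hK]; ring
  refine le_trans hmain ?_
  apply mul_le_mul_left
  calc K = ENNReal.ofReal K.toReal := (ENNReal.ofReal_toReal hKfin).symm
    _ ≤ ENNReal.ofReal (K.toReal + 1) := ENNReal.ofReal_le_ofReal (by linarith)
end
end

section
/- Let α ∈ (0,1). Then the integral ∫_{{z ∈ ℝ² : 0 ≤ z₁ ≤ 1/2}} |(1−z₁, z₂)|^{−(2+α)} z₁^{−(1−α)} dz is finite. Consequently, for every x ∈ ℝ²₊, the change of variables y = (x₁z₁, x₂ + x₁z₂) gives ∫_{{y : 0 ≤ y₁ ≤ x₁/2}} |x−y|^{−(2+α)} y₁^{−(1−α)} dy ≤ C x₁^{−1} with C depending only on α. -/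
noncomputable section

open MeasureTheory Real Set ENNReal NNReal

/- ### Auxiliary material -/

/-- The identification of `ℝ²` with `ℝ × ℝ`, as a measurable equivalence. -/
def eqv2 : Pt ≃ᵐ (ℝ × ℝ) :=
  (MeasurableEquiv.toLp 2 (Fin 2 → ℝ)).symm.trans (MeasurableEquiv.piFinTwo fun _ => ℝ)

lemma eqv2_apply (y : Pt) : eqv2 y = (y 0, y 1) := rfl

lemma eqv2_mp : MeasurePreserving eqv2 volume volume := by
  have h1 := EuclideanSpace.volume_preserving_symm_measurableEquiv_toLp (ι := Fin 2)
  have h2 := volume_preserving_piFinTwo (fun _ : Fin 2 => ℝ)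
  exact (h2.comp h1 : _)

lemma norm_mk2 (a b : ℝ) : ‖mk2 a b‖ = Real.sqrt (a ^ 2 + b ^ 2) := by
  rw [EuclideanSpace.norm_eq]
  simp [mk2, Fin.sum_univ_two, Real.norm_eq_abs, sq_abs]

lemma norm_sub_eq (x y : Pt) : ‖x - y‖ = Real.sqrt ((x 0 - y 0) ^ 2 + (x 1 - y 1) ^ 2) := by
  rw [EuclideanSpace.norm_eq]
  simp [Fin.sum_univ_two, Real.norm_eq_abs, sq_abs, PiLp.sub_apply]

lemma sqrt_lb (a b : ℝ) : (|a| + |b|) / 2 ≤ Real.sqrt (a ^ 2 + b ^ 2) := by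
  have h1 : |a| ≤ Real.sqrt (a ^ 2 + b ^ 2) := by
    rw [← Real.sqrt_sq_eq_abs]
    exact Real.sqrt_le_sqrt (by nlinarith)
  have h2 : |b| ≤ Real.sqrt (a ^ 2 + b ^ 2) := by
    rw [← Real.sqrt_sq_eq_abs]
    exact Real.sqrt_le_sqrt (by nlinarith)
  linarith

lemma measurable_coord (i : Fin 2) : Measurable fun y : Pt => y i :=
  (measurable_pi_apply i).comp (MeasurableEquiv.toLp 2 (Fin 2 → ℝ)).symm.measurable

lemma strip_measurable (b : ℝ) : MeasurableSet {y : Pt | 0 ≤ y 0 ∧ y 0 ≤ b} :=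
  (measurableSet_le measurable_const (measurable_coord 0)).inter
    (measurableSet_le (measurable_coord 0) measurable_const)

lemma strip_lemma (b : ℝ) (g₁ g₂ : ℝ → ℝ) (h₁ : IntegrableOn g₁ (Icc 0 b)) (h₂ : Integrable g₂) :
    IntegrableOn (fun y : Pt => g₁ (y 0) * g₂ (y 1)) {y : Pt | 0 ≤ y 0 ∧ y 0 ≤ b} ∧
    ∫ y in {y : Pt | 0 ≤ y 0 ∧ y 0 ≤ b}, g₁ (y 0) * g₂ (y 1) =
      (∫ t in Icc 0 b, g₁ t) * ∫ s, g₂ s := by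
  have hset : {y : Pt | 0 ≤ y 0 ∧ y 0 ≤ b} = eqv2 ⁻¹' (Icc 0 b ×ˢ (univ : Set ℝ)) := by
    ext y
    simp [eqv2_apply, Set.mem_prod, Set.mem_Icc]
  have hT : MeasurableSet (Icc 0 b ×ˢ (univ : Set ℝ)) :=
    measurableSet_Icc.prod MeasurableSet.univ
  have hmp : MeasurePreserving eqv2 (volume.restrict {y : Pt | 0 ≤ y 0 ∧ y 0 ≤ b})
      (volume.restrict (Icc 0 b ×ˢ (univ : Set ℝ))) := by
    rw [hset]; exact eqv2_mp.restrict_preimage hT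
  have hprod : (volume : Measure (ℝ × ℝ)).restrict (Icc 0 b ×ˢ (univ : Set ℝ)) =
      (volume.restrict (Icc 0 b)).prod volume := by
    rw [Measure.volume_eq_prod, ← Measure.prod_restrict, Measure.restrict_univ]
  have hF : Integrable (fun p : ℝ × ℝ => g₁ p.1 * g₂ p.2)
      ((volume : Measure (ℝ × ℝ)).restrict (Icc 0 b ×ˢ (univ : Set ℝ))) := by
    rw [hprod]; exact h₁.mul_prod h₂
  have hae : (fun y : Pt => g₁ (y 0) * g₂ (y 1)) =ᶠ[ae (volume.restrict {y : Pt | 0 ≤ y 0 ∧ y 0 ≤ b})]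
      fun y : Pt => (fun p : ℝ × ℝ => g₁ p.1 * g₂ p.2) (eqv2 y) :=
    Filter.Eventually.of_forall fun y => rfl
  constructor
  · have h := (hmp.integrable_comp_emb eqv2.measurableEmbedding).2 hF
    exact (Integrable.congr h hae.symm : _)
  · rw [integral_congr_ae hae]
    rw [show (∫ a in {y : Pt | 0 ≤ y 0 ∧ y 0 ≤ b}, (fun p : ℝ × ℝ => g₁ p.1 * g₂ p.2) (eqv2 a)) =
        ∫ p in (Icc 0 b ×ˢ (univ : Set ℝ)), g₁ p.1 * g₂ p.2 from
      hmp.integral_comp eqv2.measurableEmbedding (fun p : ℝ × ℝ => g₁ p.1 * g₂ p.2)]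
    show (∫ p in _, _ ∂(volume : Measure (ℝ × ℝ))) = _
    rw [hprod]
    exact integral_prod_mul g₁ g₂

lemma g1_lemma (α b : ℝ) (hα0 : 0 < α) (hb : 0 < b) :
    IntegrableOn (fun t : ℝ => (t ^ (1 - α))⁻¹) (Icc 0 b) ∧
    ∫ t in Icc 0 b, (t ^ (1 - α))⁻¹ = b ^ α / α := by
  have hexp : (-1 : ℝ) < α - 1 := by linarith
  have hcong : EqOn (fun t : ℝ => t ^ (α - 1)) (fun t : ℝ => (t ^ (1 - α))⁻¹) (Icc 0 b) := by
    intro t ht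
    simp only
    rw [show α - 1 = -(1 - α) by ring, Real.rpow_neg ht.1]
  have hint : IntegrableOn (fun t : ℝ => t ^ (α - 1)) (Icc 0 b) := by
    have h := intervalIntegral.intervalIntegrable_rpow' (r := α - 1) (a := 0) (b := b) hexp
    rw [intervalIntegrable_iff_integrableOn_Ioc_of_le hb.le] at h
    exact (integrableOn_Icc_iff_integrableOn_Ioc).2 h
  have hval : ∫ t in Icc 0 b, t ^ (α - 1) = b ^ α / α := by
    rw [integral_Icc_eq_integral_Ioc, ← intervalIntegral.integral_of_le hb.le,
      integral_rpow (Or.inl hexp)]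
    rw [show α - 1 + 1 = α by ring, Real.zero_rpow hα0.ne']
    ring
  refine ⟨hint.congr_fun hcong measurableSet_Icc, ?_⟩
  rw [← setIntegral_congr_fun measurableSet_Icc hcong, hval]

lemma G_int (p : ℝ) (hp : 1 < p) : Integrable (fun u : ℝ => (1 + |u|) ^ (-p)) := by
  have h := integrable_one_add_norm (E := ℝ) (μ := volume) (r := p) (by simpa using hp)
  simpa [Real.norm_eq_abs] using h

lemma g2_lemma (p c d : ℝ) (hp : 1 < p) (hc : 0 < c) :
    Integrable (fun s : ℝ => (c + |s - d|) ^ (-p)) ∧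
    ∫ s : ℝ, (c + |s - d|) ^ (-p) = c ^ (1 - p) * ∫ u : ℝ, (1 + |u|) ^ (-p) := by
  have hG := G_int p hp
  have key : ∀ s : ℝ, (c + |s - d|) ^ (-p) = c ^ (-p) * (1 + |c⁻¹ * (s - d)|) ^ (-p) := by
    intro s
    have h1 : c + |s - d| = c * (1 + |c⁻¹ * (s - d)|) := by
      rw [abs_mul, abs_of_pos (inv_pos.2 hc)]
      field_simp
    rw [h1, Real.mul_rpow hc.le (by positivity)]
  have hcomp : Integrable (fun s : ℝ => (1 + |c⁻¹ * (s - d)|) ^ (-p)) := by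
    have h2 : Integrable (fun s : ℝ => (1 + |c⁻¹ * s|) ^ (-p)) :=
      hG.comp_mul_left' (inv_ne_zero hc.ne')
    exact h2.comp_sub_right d
  constructor
  · exact (hcomp.const_mul (c ^ (-p))).congr
      (Filter.Eventually.of_forall fun s => (key s).symm)
  · calc ∫ s : ℝ, (c + |s - d|) ^ (-p)
        = ∫ s : ℝ, c ^ (-p) * (1 + |c⁻¹ * (s - d)|) ^ (-p) := by
          exact integral_congr_ae (Filter.Eventually.of_forall key)
      _ = c ^ (-p) * ∫ s : ℝ, (1 + |c⁻¹ * (s - d)|) ^ (-p) := integral_const_mul _ _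
      _ = c ^ (-p) * ∫ s : ℝ, (1 + |c⁻¹ * s|) ^ (-p) := by
          rw [integral_sub_right_eq_self (fun s : ℝ => (1 + |c⁻¹ * s|) ^ (-p)) d]
      _ = c ^ (-p) * (c * ∫ u : ℝ, (1 + |u|) ^ (-p)) := by
          rw [Measure.integral_comp_mul_left (fun u : ℝ => (1 + |u|) ^ (-p)) c⁻¹]
          rw [inv_inv, abs_of_pos hc, smul_eq_mul]
      _ = c ^ (1 - p) * ∫ u : ℝ, (1 + |u|) ^ (-p) := by
          rw [← mul_assoc]
          congr 1
          rw [show (1 : ℝ) - p = -p + 1 by ring, Real.rpow_add hc, Real.rpow_one]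

/-- The dominating product function is integrable on the strip, with explicit integral. -/
lemma dom_lemma (α c d : ℝ) (hα0 : 0 < α) (hα1 : α < 1) (hc : 0 < c) :
    IntegrableOn (fun y : Pt => ((y 0) ^ (1 - α))⁻¹ * (2 ^ (2 + α) * (c + |y 1 - d|) ^ (-(2 + α))))
      {y : Pt | 0 ≤ y 0 ∧ y 0 ≤ c} ∧
    ∫ y in {y : Pt | 0 ≤ y 0 ∧ y 0 ≤ c},
        ((y 0) ^ (1 - α))⁻¹ * (2 ^ (2 + α) * (c + |y 1 - d|) ^ (-(2 + α)))
      = (c ^ α / α) * (2 ^ (2 + α) * (c ^ (1 - (2 + α)) * ∫ u : ℝ, (1 + |u|) ^ (-(2 + α)))) := by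
  have hp : (1 : ℝ) < 2 + α := by linarith
  obtain ⟨h2i, h2v⟩ := g2_lemma (2 + α) c d hp hc
  obtain ⟨h1i, h1v⟩ := g1_lemma α c hα0 hc
  obtain ⟨hi, hv⟩ := strip_lemma c (fun t => (t ^ (1 - α))⁻¹)
    (fun s => 2 ^ (2 + α) * (c + |s - d|) ^ (-(2 + α))) h1i (h2i.const_mul _)
  refine ⟨hi, ?_⟩
  rw [hv, h1v, integral_const_mul, h2v]

/-- Key pointwise bound: if `(c + |t|)/2 ≤ n` then `(n^(2+α))⁻¹ ≤ 2^(2+α) * (c+|t|)^(-(2+α))`. -/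
lemma inv_rpow_le (α c t n : ℝ) (hα0 : 0 < α) (hc : 0 < c) (hn : (c + |t|) / 2 ≤ n) :
    (n ^ (2 + α))⁻¹ ≤ 2 ^ (2 + α) * (c + |t|) ^ (-(2 + α)) := by
  have hu : (0 : ℝ) < c + |t| := by positivity
  have h0 : (0 : ℝ) < ((c + |t|) / 2) ^ (2 + α) := Real.rpow_pos_of_pos (by positivity) _
  have h1 : ((c + |t|) / 2) ^ (2 + α) ≤ n ^ (2 + α) :=
    Real.rpow_le_rpow (by positivity) hn (by linarith)
  have h2 : (n ^ (2 + α))⁻¹ ≤ (((c + |t|) / 2) ^ (2 + α))⁻¹ := inv_anti₀ h0 h1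
  refine h2.trans_eq ?_
  rw [Real.div_rpow hu.le (by norm_num : (0:ℝ) ≤ 2)]
  rw [inv_div, div_eq_mul_inv, ← Real.rpow_neg hu.le]

/-- **A model integral bound**: the integral
`∫_{0 ≤ z₁ ≤ 1/2} |(1−z₁,z₂)|^{−(2+α)} z₁^{−(1−α)} dz` is finite, and consequently by the
change of variables `y = (x₁z₁, x₂+x₁z₂)`,
`∫_{0 ≤ y₁ ≤ x₁/2} |x−y|^{−(2+α)} y₁^{−(1−α)} dy ≤ C x₁^{−1}` with `C = C(α)`. -/
theorem model_integral_bound (α : ℝ) (hα0 : 0 < α) (hα1 : α < 1) :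
    IntegrableOn
      (fun z : Pt => (‖mk2 (1 - z 0) (z 1)‖ ^ (2 + α))⁻¹ * ((z 0) ^ (1 - α))⁻¹)
      {z : Pt | 0 ≤ z 0 ∧ z 0 ≤ 1 / 2} volume ∧
    ∃ C : ℝ, 0 < C ∧
      ∀ x : Pt, x ∈ halfPlane →
        (∫ y in {y : Pt | 0 ≤ y 0 ∧ y 0 ≤ x 0 / 2},
            (‖x - y‖ ^ (2 + α))⁻¹ * ((y 0) ^ (1 - α))⁻¹)
          ≤ C * (x 0)⁻¹ := by
  constructor
  · -- Part 1: integrability of the model integrand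
    obtain ⟨hgi, -⟩ := dom_lemma α (1/2) 0 hα0 hα1 (by norm_num)
    have hS := strip_measurable (1/2)
    refine Integrable.mono' hgi ?_ ?_
    · -- a.e. strong measurability
      apply Measurable.aestronglyMeasurable
      apply Measurable.mul
      · apply Measurable.inv
        have : Measurable fun z : Pt => ‖mk2 (1 - z 0) (z 1)‖ := by
          simp only [norm_mk2]
          exact (((measurable_const.sub (measurable_coord 0)).pow_const 2).add
            ((measurable_coord 1).pow_const 2)).sqrt
        fun_prop
      · apply Measurable.inv
        fun_prop
    · filter_upwards [ae_restrict_mem hS] with z hz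
      obtain ⟨hz0, hz1⟩ := hz
      have hA : (0 : ℝ) ≤ (‖mk2 (1 - z 0) (z 1)‖ ^ (2 + α))⁻¹ :=
        inv_nonneg.2 (Real.rpow_nonneg (norm_nonneg _) _)
      have hB : (0 : ℝ) ≤ ((z 0) ^ (1 - α))⁻¹ :=
        inv_nonneg.2 (Real.rpow_nonneg hz0 _)
      rw [Real.norm_eq_abs, abs_of_nonneg (mul_nonneg hA hB)]
      have hn : ((1:ℝ)/2 + |z 1 - 0|) / 2 ≤ ‖mk2 (1 - z 0) (z 1)‖ := by
        rw [norm_mk2, sub_zero]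
        have hlb := sqrt_lb (1 - z 0) (z 1)
        have : (1:ℝ)/2 ≤ |1 - z 0| := by
          rw [abs_of_nonneg (by linarith)]; linarith
        linarith
      have hkey := inv_rpow_le α (1/2) (z 1 - 0) (‖mk2 (1 - z 0) (z 1)‖) hα0 (by norm_num) hn
      calc (‖mk2 (1 - z 0) (z 1)‖ ^ (2 + α))⁻¹ * ((z 0) ^ (1 - α))⁻¹
          ≤ (2 ^ (2 + α) * ((1:ℝ)/2 + |z 1 - 0|) ^ (-(2 + α))) * ((z 0) ^ (1 - α))⁻¹ :=
            mul_le_mul_of_nonneg_right hkey hB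
        _ = ((z 0) ^ (1 - α))⁻¹ * (2 ^ (2 + α) * ((1:ℝ)/2 + |z 1 - 0|) ^ (-(2 + α))) :=
            mul_comm _ _
  · -- Part 2: the uniform bound
    set K : ℝ := ∫ u : ℝ, (1 + |u|) ^ (-(2 + α)) with hK
    have hK0 : 0 ≤ K := integral_nonneg fun u => Real.rpow_nonneg (by positivity) _
    refine ⟨2 ^ (3 + α) * (K + 1) / α, by positivity, ?_⟩
    intro x hx
    have hx0 : 0 < x 0 := hx
    set c : ℝ := x 0 / 2 with hcdef
    have hc : 0 < c := by positivity
    obtain ⟨hgi, hgv⟩ := dom_lemma α c (x 1) hα0 hα1 hc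
    have hS := strip_measurable c
    have hmono : (∫ y in {y : Pt | 0 ≤ y 0 ∧ y 0 ≤ c},
        (‖x - y‖ ^ (2 + α))⁻¹ * ((y 0) ^ (1 - α))⁻¹)
        ≤ ∫ y in {y : Pt | 0 ≤ y 0 ∧ y 0 ≤ c},
            ((y 0) ^ (1 - α))⁻¹ * (2 ^ (2 + α) * (c + |y 1 - x 1|) ^ (-(2 + α))) := by
      refine integral_mono_of_nonneg ?_ hgi ?_
      · filter_upwards [ae_restrict_mem hS] with y hy
        exact mul_nonneg (inv_nonneg.2 (Real.rpow_nonneg (norm_nonneg _) _))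
          (inv_nonneg.2 (Real.rpow_nonneg hy.1 _))
      · filter_upwards [ae_restrict_mem hS] with y hy
        obtain ⟨hy0, hy1⟩ := hy
        have hB : (0 : ℝ) ≤ ((y 0) ^ (1 - α))⁻¹ :=
          inv_nonneg.2 (Real.rpow_nonneg hy0 _)
        have hn : (c + |y 1 - x 1|) / 2 ≤ ‖x - y‖ := by
          rw [norm_sub_eq]
          have hlb := sqrt_lb (x 0 - y 0) (x 1 - y 1)
          have h1 : c ≤ |x 0 - y 0| := by
            rw [abs_of_nonneg (by simp only [hcdef] at hy1 ⊢; linarith)]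
            simp only [hcdef] at hy1 ⊢; linarith
          have h2 : |y 1 - x 1| = |x 1 - y 1| := abs_sub_comm _ _
          linarith
        have hkey := inv_rpow_le α c (y 1 - x 1) (‖x - y‖) hα0 hc hn
        calc (‖x - y‖ ^ (2 + α))⁻¹ * ((y 0) ^ (1 - α))⁻¹
            ≤ (2 ^ (2 + α) * (c + |y 1 - x 1|) ^ (-(2 + α))) * ((y 0) ^ (1 - α))⁻¹ :=
              mul_le_mul_of_nonneg_right hkey hB
          _ = ((y 0) ^ (1 - α))⁻¹ * (2 ^ (2 + α) * (c + |y 1 - x 1|) ^ (-(2 + α))) :=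
              mul_comm _ _
    have harith : (c ^ α / α) * (2 ^ (2 + α) * (c ^ (1 - (2 + α)) * K))
        = (2 ^ (3 + α) * K / α) * (x 0)⁻¹ := by
      have hsum : c ^ α * c ^ (1 - (2 + α)) = c⁻¹ := by
        rw [← Real.rpow_add hc, show α + (1 - (2 + α)) = -1 by ring]
        rw [Real.rpow_neg hc.le, Real.rpow_one]
      have hcinv : c⁻¹ = 2 * (x 0)⁻¹ := by
        rw [hcdef, inv_div, div_eq_mul_inv]
      have h2pow : (2:ℝ) ^ (2 + α) * 2 = 2 ^ (3 + α) := by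
        have h := Real.rpow_add (two_pos : (0:ℝ) < 2) (2 + α) 1
        rw [Real.rpow_one] at h
        rw [← h, show (2:ℝ) + α + 1 = 3 + α by ring]
      calc (c ^ α / α) * (2 ^ (2 + α) * (c ^ (1 - (2 + α)) * K))
          = (2 ^ (2 + α) * (c ^ α * c ^ (1 - (2 + α))) * K) / α := by ring
        _ = (2 ^ (2 + α) * (2 * (x 0)⁻¹) * K) / α := by rw [hsum, hcinv]
        _ = ((2 ^ (2 + α) * 2) * K / α) * (x 0)⁻¹ := by ring
        _ = (2 ^ (3 + α) * K / α) * (x 0)⁻¹ := by rw [h2pow]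
    calc (∫ y in {y : Pt | 0 ≤ y 0 ∧ y 0 ≤ x 0 / 2},
            (‖x - y‖ ^ (2 + α))⁻¹ * ((y 0) ^ (1 - α))⁻¹)
        ≤ (c ^ α / α) * (2 ^ (2 + α) * (c ^ (1 - (2 + α)) * K)) := by
          rw [hgv] at hmono; exact hmono
      _ = (2 ^ (3 + α) * K / α) * (x 0)⁻¹ := harith
      _ ≤ (2 ^ (3 + α) * (K + 1) / α) * (x 0)⁻¹ := by
          gcongr
          linarith
end
end

section
/- Let α ∈ (0,1). Then the integral ∫_{{z ∈ ℝ² : z₁ > 0}} z₁^{−1/2} |(1−z₁, z₂)|^{−(1+α)} |(1+z₁, z₂)|^{−1} dz is finite. -/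
noncomputable section

open MeasureTheory Real Set ENNReal NNReal

namespace WeightedAux

/-- The model integrand transported to `ℝ × ℝ`. -/
def G (α : ℝ) (p : ℝ × ℝ) : ℝ :=
  (Real.sqrt p.1)⁻¹ * ((Real.sqrt ((1 - p.1) ^ 2 + p.2 ^ 2)) ^ (1 + α))⁻¹
    * (Real.sqrt ((1 + p.1) ^ 2 + p.2 ^ 2))⁻¹

lemma measurable_G (α : ℝ) : Measurable (G α) := by
  unfold G; fun_prop

lemma G_nonneg (α : ℝ) (p : ℝ × ℝ) : 0 ≤ G α p := by
  unfold G; positivity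

lemma prodInt {f g : ℝ → ℝ} {S T : Set ℝ} (hf : IntegrableOn f S) (hg : IntegrableOn g T) :
    IntegrableOn (fun p : ℝ × ℝ => f p.1 * g p.2) (S ×ˢ T) := by
  rw [IntegrableOn, Measure.volume_eq_prod, ← Measure.prod_restrict]
  exact hf.mul_prod hg

lemma int_sqrt_inv : IntegrableOn (fun x : ℝ => (Real.sqrt x)⁻¹) (Ioc (0:ℝ) (1/2)) := by
  have h : IntervalIntegrable (fun x : ℝ => x ^ (-(1/2) : ℝ)) volume 0 (1/2) :=
    intervalIntegral.intervalIntegrable_rpow' (by norm_num)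
  rw [intervalIntegrable_iff_integrableOn_Ioc_of_le (by norm_num : (0:ℝ) ≤ 1/2)] at h
  refine h.congr_fun (fun x hx => ?_) measurableSet_Ioc
  dsimp only
  rw [Real.rpow_neg hx.1.le, Real.sqrt_eq_rpow]

lemma int_abs {s : ℝ} (hs1 : s < 1) (c a b : ℝ) (ha : a ≤ c) (hb : c ≤ b) :
    IntegrableOn (fun x : ℝ => |x - c| ^ (-s)) (Ioc a b) := by
  have base : ∀ u v : ℝ, IntervalIntegrable (fun x : ℝ => x ^ (-s)) volume u v :=
    fun u v => intervalIntegral.intervalIntegrable_rpow' (by linarith)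
  have h1 : IntegrableOn (fun x : ℝ => |x - c| ^ (-s)) (Ioc a c) := by
    have h0 := ((base 0 (c - a)).comp_sub_left c)
    have h : IntervalIntegrable (fun x : ℝ => (c - x) ^ (-s)) volume a c := by
      simpa using h0.symm
    rw [intervalIntegrable_iff_integrableOn_Ioc_of_le ha] at h
    refine h.congr_fun (fun x hx => ?_) measurableSet_Ioc
    rw [abs_sub_comm, abs_of_nonneg (by linarith [hx.2] : (0:ℝ) ≤ c - x)]
  have h2 : IntegrableOn (fun x : ℝ => |x - c| ^ (-s)) (Ioc c b) := by
    have h := ((base 0 (b - c)).comp_sub_right c)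
    simp only [zero_add, sub_add_cancel] at h
    rw [intervalIntegrable_iff_integrableOn_Ioc_of_le hb] at h
    refine h.congr_fun (fun x hx => ?_) measurableSet_Ioc
    rw [abs_of_nonneg (by linarith [hx.1] : (0:ℝ) ≤ x - c)]
  have h3 := h1.union h2
  rwa [Ioc_union_Ioc_eq_Ioc ha hb] at h3

lemma g_int {s : ℝ} (hs0 : 0 < s) (hs1 : s < 1) :
    Integrable (fun y : ℝ => |y| ^ (-s) * (Real.sqrt (1 + y ^ 2))⁻¹) := by
  set g : ℝ → ℝ := fun y => |y| ^ (-s) * (Real.sqrt (1 + y ^ 2))⁻¹ with hg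
  have gmeas : Measurable g := by rw [hg]; fun_prop
  have gnonneg : ∀ y, 0 ≤ g y := fun y => by simp only [hg]; positivity
  have hmid : IntegrableOn g (Ioc (-2:ℝ) 1) := by
    have hb : IntegrableOn (fun y : ℝ => |y - 0| ^ (-s)) (Ioc (-2:ℝ) 1) :=
      int_abs hs1 0 _ _ (by norm_num) (by norm_num)
    simp only [sub_zero] at hb
    refine Integrable.mono' hb gmeas.aestronglyMeasurable.restrict (ae_of_all _ fun y => ?_)
    rw [Real.norm_eq_abs, abs_of_nonneg (gnonneg y)]
    have h1 : (Real.sqrt (1 + y ^ 2))⁻¹ ≤ 1 := by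
      rw [inv_le_one_iff₀]
      right
      have h2 := Real.sqrt_le_sqrt (show (1:ℝ) ≤ 1 + y ^ 2 by nlinarith)
      rwa [Real.sqrt_one] at h2
    calc g y ≤ |y| ^ (-s) * 1 := by
          simp only [hg]
          exact mul_le_mul_of_nonneg_left h1 (Real.rpow_nonneg (abs_nonneg y) _)
      _ = |y| ^ (-s) := mul_one _
  have htail : IntegrableOn g (Ioi (1:ℝ)) := by
    have hb : IntegrableOn (fun y : ℝ => y ^ (-s - 1)) (Ioi (1:ℝ)) :=
      integrableOn_Ioi_rpow_of_lt (by linarith) one_pos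
    refine Integrable.mono' hb gmeas.aestronglyMeasurable.restrict
      ((ae_restrict_iff' measurableSet_Ioi).mpr (ae_of_all _ fun y hy => ?_))
    have hy1 : (1:ℝ) < y := hy
    rw [Real.norm_eq_abs, abs_of_nonneg (gnonneg y)]
    have hsq : y ≤ Real.sqrt (1 + y ^ 2) := by
      rw [show y = Real.sqrt (y ^ 2) from (Real.sqrt_sq (by linarith)).symm]
      exact Real.sqrt_le_sqrt (by nlinarith [Real.sq_sqrt (by positivity : (0:ℝ) ≤ y^2)])
    calc g y ≤ y ^ (-s) * y⁻¹ := by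
          show |y| ^ (-s) * (Real.sqrt (1 + y ^ 2))⁻¹ ≤ _
          rw [abs_of_nonneg (by linarith : (0:ℝ) ≤ y)]
          refine mul_le_mul_of_nonneg_left ?_ (Real.rpow_nonneg (by linarith) _)
          exact inv_anti₀ (by linarith) hsq
      _ = y ^ (-s - 1) := by
          rw [← Real.rpow_neg_one y, ← Real.rpow_add (by linarith : (0:ℝ) < y)]
          ring_nf
  have hneg : IntegrableOn g (Iio (-1:ℝ)) := by
    have mp : MeasurePreserving (fun y : ℝ => -y) volume volume := Measure.measurePreserving_neg _
    have emb : MeasurableEmbedding (fun y : ℝ => -y) :=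
      (Homeomorph.neg ℝ).measurableEmbedding
    have h := (mp.integrableOn_comp_preimage emb).mpr htail
    have hgeq : (g ∘ fun y : ℝ => -y) = g := by
      funext y; simp [hg, neg_sq]
    have hseq : (fun y : ℝ => -y) ⁻¹' (Ioi 1) = Iio (-1:ℝ) := by
      ext y; simp only [mem_preimage, mem_Ioi, mem_Iio]; constructor <;> intro <;> linarith
    rwa [hgeq, hseq] at h
  rw [← integrableOn_univ]
  have cover : (univ : Set ℝ) ⊆ Ioc (-2:ℝ) 1 ∪ (Iio (-1:ℝ) ∪ Ioi 1) := by
    intro y _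
    by_cases h1 : y ≤ 1
    · by_cases h2 : -2 < y
      · exact Or.inl ⟨h2, h1⟩
      · exact Or.inr (Or.inl (by push_neg at h2; simpa using by linarith))
    · exact Or.inr (Or.inr (by push_neg at h1; exact h1))
  exact (hmid.union (hneg.union htail)).mono_set cover

lemma inv_rpow_le_inv {t u r : ℝ} (ht : 0 < t) (htu : t ≤ u) (hr : 0 ≤ r) :
    (u ^ r)⁻¹ ≤ (t ^ r)⁻¹ := by
  apply inv_anti₀ (Real.rpow_pos_of_pos ht r)
  exact Real.rpow_le_rpow ht.le htu hr

set_option maxHeartbeats 1000000 in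
lemma G_integrable (α : ℝ) (hα0 : 0 < α) (hα1 : α < 1) :
    IntegrableOn (G α) {p : ℝ × ℝ | 0 < p.1} volume := by
  set s : ℝ := (1 + α) / 2 with hs
  have hs0 : 0 < s := by rw [hs]; linarith
  have hs1 : s < 1 := by rw [hs]; linarith
  have hα1' : (1:ℝ) ≤ 1 + α := by linarith
  have hGmeas : AEStronglyMeasurable (G α) (volume : Measure (ℝ × ℝ)) := (measurable_G α).aestronglyMeasurable
  -- Piece A : 0 < x ≤ 1/2
  have hA : IntegrableOn (G α) (Ioc (0:ℝ) (1/2) ×ˢ (univ : Set ℝ)) volume := by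
    have hf : IntegrableOn (fun x : ℝ => (2:ℝ) ^ (1 + α) * (Real.sqrt x)⁻¹)
        (Ioc (0:ℝ) (1/2)) volume := int_sqrt_inv.const_mul _
    have hg : IntegrableOn (fun y : ℝ => (1 + y ^ 2)⁻¹) (univ : Set ℝ) volume :=
      integrableOn_univ.mpr integrable_inv_one_add_sq
    have hbound : IntegrableOn
        (fun p : ℝ × ℝ => ((2:ℝ) ^ (1 + α) * (Real.sqrt p.1)⁻¹) * (1 + p.2 ^ 2)⁻¹)
        (Ioc (0:ℝ) (1/2) ×ˢ (univ : Set ℝ)) volume :=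
      prodInt (f := fun x : ℝ => (2:ℝ) ^ (1 + α) * (Real.sqrt x)⁻¹)
        (g := fun y : ℝ => (1 + y ^ 2)⁻¹) hf hg
    refine Integrable.mono' hbound hGmeas.restrict
      ((ae_restrict_iff' (measurableSet_Ioc.prod MeasurableSet.univ)).mpr
        (ae_of_all _ fun p hp => ?_))
    obtain ⟨⟨hx0, hx2⟩, -⟩ := hp
    obtain ⟨x, y⟩ := p
    simp only at hx0 hx2 ⊢
    rw [Real.norm_eq_abs, abs_of_nonneg (G_nonneg α (x, y))]
    have hq : (0:ℝ) < Real.sqrt (1 + y ^ 2) := Real.sqrt_pos.mpr (by positivity)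
    have h1q : (1:ℝ) ≤ Real.sqrt (1 + y ^ 2) := by
      have h := Real.sqrt_le_sqrt (show (1:ℝ) ≤ 1 + y ^ 2 by nlinarith)
      rwa [Real.sqrt_one] at h
    have hb1 : Real.sqrt (1 + y ^ 2) * 2⁻¹ ≤ Real.sqrt ((1 - x) ^ 2 + y ^ 2) := by
      have h4 : (1 + y ^ 2) * 2⁻¹ ^ 2 ≤ (1 - x) ^ 2 + y ^ 2 := by nlinarith
      have h := Real.sqrt_le_sqrt h4
      rwa [Real.sqrt_mul (by positivity), Real.sqrt_sq (by norm_num)] at h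
    have hkey1 : ((Real.sqrt ((1 - x) ^ 2 + y ^ 2)) ^ (1 + α))⁻¹
        ≤ (2:ℝ) ^ (1 + α) * (Real.sqrt (1 + y ^ 2))⁻¹ := by
      have e3 : Real.sqrt (1 + y ^ 2) ≤ (Real.sqrt (1 + y ^ 2)) ^ (1 + α) := by
        nth_rewrite 1 [← Real.rpow_one (Real.sqrt (1 + y ^ 2))]
        exact Real.rpow_le_rpow_of_exponent_le h1q hα1'
      calc ((Real.sqrt ((1 - x) ^ 2 + y ^ 2)) ^ (1 + α))⁻¹
          ≤ ((Real.sqrt (1 + y ^ 2) * 2⁻¹) ^ (1 + α))⁻¹ :=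
            inv_rpow_le_inv (by positivity) hb1 (by linarith)
        _ = ((Real.sqrt (1 + y ^ 2)) ^ (1 + α))⁻¹ * (2:ℝ) ^ (1 + α) := by
            rw [Real.mul_rpow hq.le (by norm_num),
              Real.inv_rpow (by norm_num : (0:ℝ) ≤ 2), mul_inv, inv_inv]
        _ ≤ (Real.sqrt (1 + y ^ 2))⁻¹ * (2:ℝ) ^ (1 + α) := by
            exact mul_le_mul_of_nonneg_right (inv_anti₀ hq e3) (by positivity)
        _ = (2:ℝ) ^ (1 + α) * (Real.sqrt (1 + y ^ 2))⁻¹ := mul_comm _ _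
    have hkey2 : (Real.sqrt ((1 + x) ^ 2 + y ^ 2))⁻¹ ≤ (Real.sqrt (1 + y ^ 2))⁻¹ :=
      inv_anti₀ hq (Real.sqrt_le_sqrt (by nlinarith))
    calc G α (x, y)
        ≤ (Real.sqrt x)⁻¹ * ((2:ℝ) ^ (1 + α) * (Real.sqrt (1 + y ^ 2))⁻¹)
            * (Real.sqrt (1 + y ^ 2))⁻¹ := by
          unfold G
          simp only
          gcongr <;> positivity
      _ = ((2:ℝ) ^ (1 + α) * (Real.sqrt x)⁻¹)
            * (Real.sqrt (1 + y ^ 2) * Real.sqrt (1 + y ^ 2))⁻¹ := by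
          rw [mul_inv]; ring
      _ = ((2:ℝ) ^ (1 + α) * (Real.sqrt x)⁻¹) * (1 + y ^ 2)⁻¹ := by
          rw [Real.mul_self_sqrt (by positivity)]
  -- Piece B : 1/2 < x ≤ 2
  have hB : IntegrableOn (G α) (Ioc (1/2:ℝ) 2 ×ˢ (univ : Set ℝ)) volume := by
    have hbound : IntegrableOn
        (fun p : ℝ × ℝ => (Real.sqrt 2 * |p.1 - 1| ^ (-s))
          * (|p.2| ^ (-s) * (Real.sqrt (1 + p.2 ^ 2))⁻¹))
        (Ioc (1/2:ℝ) 2 ×ˢ (univ : Set ℝ)) volume := by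
      have hf : IntegrableOn (fun x : ℝ => Real.sqrt 2 * |x - 1| ^ (-s))
          (Ioc (1/2:ℝ) 2) volume :=
        (int_abs hs1 1 (1/2) 2 (by norm_num) (by norm_num)).const_mul _
      have hg : IntegrableOn (fun y : ℝ => |y| ^ (-s) * (Real.sqrt (1 + y ^ 2))⁻¹)
          (univ : Set ℝ) volume := integrableOn_univ.mpr (g_int hs0 hs1)
      exact prodInt (f := fun x : ℝ => Real.sqrt 2 * |x - 1| ^ (-s))
        (g := fun y : ℝ => |y| ^ (-s) * (Real.sqrt (1 + y ^ 2))⁻¹) hf hg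
    have hnull1 : (volume : Measure (ℝ × ℝ)) {p : ℝ × ℝ | p.1 = 1} = 0 := by
      have he : {p : ℝ × ℝ | p.1 = 1} = ({1} : Set ℝ) ×ˢ (univ : Set ℝ) := by
        ext ⟨a, b⟩; simp [Set.mem_prod, eq_comm]
      rw [he, Measure.volume_eq_prod, Measure.prod_prod, Real.volume_singleton, zero_mul]
    have hnull2 : (volume : Measure (ℝ × ℝ)) {p : ℝ × ℝ | p.2 = 0} = 0 := by
      have he : {p : ℝ × ℝ | p.2 = 0} = (univ : Set ℝ) ×ˢ ({0} : Set ℝ) := by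
        ext ⟨a, b⟩; simp [Set.mem_prod, eq_comm]
      rw [he, Measure.volume_eq_prod, Measure.prod_prod, Real.volume_singleton, mul_zero]
    have hae1 : ∀ᵐ p : ℝ × ℝ ∂volume, p.1 ≠ 1 := by
      rw [ae_iff]; simpa [not_not] using hnull1
    have hae2 : ∀ᵐ p : ℝ × ℝ ∂volume, p.2 ≠ 0 := by
      rw [ae_iff]; simpa [not_not] using hnull2
    refine Integrable.mono' hbound hGmeas.restrict ?_
    have hmem : ∀ᵐ p ∂(volume.restrict (Ioc (1/2:ℝ) 2 ×ˢ (univ : Set ℝ))),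
        p ∈ Ioc (1/2:ℝ) 2 ×ˢ (univ : Set ℝ) :=
      (ae_restrict_iff' (measurableSet_Ioc.prod MeasurableSet.univ)).mpr
        (ae_of_all _ fun p hp => hp)
    filter_upwards [hmem, ae_restrict_of_ae hae1, ae_restrict_of_ae hae2] with p hp hp1 hp2
    obtain ⟨⟨hx0, hx2⟩, -⟩ := hp
    obtain ⟨x, y⟩ := p
    simp only at hx0 hx2 hp1 hp2 ⊢
    rw [Real.norm_eq_abs, abs_of_nonneg (G_nonneg α (x, y))]
    have hq : (0:ℝ) < Real.sqrt (1 + y ^ 2) := Real.sqrt_pos.mpr (by positivity)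
    have habs1 : (0:ℝ) < |x - 1| := abs_pos.mpr (sub_ne_zero.mpr hp1)
    have habs2 : (0:ℝ) < |y| := abs_pos.mpr hp2
    have hq2 : (0:ℝ) < |x - 1| * |y| := mul_pos habs1 habs2
    have haKey : (Real.sqrt x)⁻¹ ≤ Real.sqrt 2 := by
      have h1 : Real.sqrt (1/2) ≤ Real.sqrt x := Real.sqrt_le_sqrt (le_of_lt hx0)
      have h2 : Real.sqrt (1/2) = (Real.sqrt 2)⁻¹ := by
        rw [show (1:ℝ)/2 = 2⁻¹ by norm_num, Real.sqrt_inv]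
      calc (Real.sqrt x)⁻¹ ≤ (Real.sqrt (1/2))⁻¹ :=
            inv_anti₀ (by rw [h2]; positivity) h1
        _ = Real.sqrt 2 := by rw [h2, inv_inv]
    have hb1 : Real.sqrt (|x - 1| * |y|) ≤ Real.sqrt ((1 - x) ^ 2 + y ^ 2) := by
      apply Real.sqrt_le_sqrt
      nlinarith [sq_nonneg (|x - 1| - |y|), sq_abs (x - 1), sq_abs y,
        mul_pos habs1 habs2]
    have hkey1 : ((Real.sqrt ((1 - x) ^ 2 + y ^ 2)) ^ (1 + α))⁻¹
        ≤ |x - 1| ^ (-s) * |y| ^ (-s) := by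
      have hsr : (Real.sqrt (|x - 1| * |y|)) ^ (1 + α) = (|x - 1| * |y|) ^ s := by
        rw [Real.sqrt_eq_rpow, ← Real.rpow_mul hq2.le]
        congr 1
        rw [hs]; ring
      calc ((Real.sqrt ((1 - x) ^ 2 + y ^ 2)) ^ (1 + α))⁻¹
          ≤ ((Real.sqrt (|x - 1| * |y|)) ^ (1 + α))⁻¹ :=
            inv_rpow_le_inv (Real.sqrt_pos.mpr hq2) hb1 (by linarith)
        _ = ((|x - 1| * |y|) ^ s)⁻¹ := by rw [hsr]
        _ = |x - 1| ^ (-s) * |y| ^ (-s) := by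
            rw [Real.mul_rpow habs1.le habs2.le, mul_inv,
              Real.rpow_neg habs1.le, Real.rpow_neg habs2.le]
    have hkey2 : (Real.sqrt ((1 + x) ^ 2 + y ^ 2))⁻¹ ≤ (Real.sqrt (1 + y ^ 2))⁻¹ :=
      inv_anti₀ hq (Real.sqrt_le_sqrt (by nlinarith))
    calc G α (x, y)
        ≤ Real.sqrt 2 * (|x - 1| ^ (-s) * |y| ^ (-s)) * (Real.sqrt (1 + y ^ 2))⁻¹ := by
          unfold G
          simp only
          gcongr <;> positivity
      _ = (Real.sqrt 2 * |x - 1| ^ (-s)) * (|y| ^ (-s) * (Real.sqrt (1 + y ^ 2))⁻¹) := by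
          ring
  -- Piece C : 2 < x
  have hC : IntegrableOn (G α) {p : ℝ × ℝ | 2 < p.1} volume := by
    have hfin : ((Module.finrank ℝ (ℝ × ℝ) : ℝ)) < 2 + α := by
      rw [show Module.finrank ℝ (ℝ × ℝ) = 2 by
        simp [Module.finrank_prod]]
      push_cast; linarith
    have hbound : Integrable
        (fun p : ℝ × ℝ => ((2:ℝ) ^ (1 + α) * (3/2 : ℝ) ^ (2 + α)) * (1 + ‖p‖) ^ (-(2 + α)))
        (volume : Measure (ℝ × ℝ)) :=
      (integrable_one_add_norm hfin).const_mul _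
    have hmeasC : MeasurableSet {p : ℝ × ℝ | 2 < p.1} :=
      measurableSet_lt measurable_const measurable_fst
    refine Integrable.mono' hbound.integrableOn hGmeas.restrict
      ((ae_restrict_iff' hmeasC).mpr (ae_of_all _ fun p hp => ?_))
    have hx : (2:ℝ) < p.1 := hp
    rw [Real.norm_eq_abs, abs_of_nonneg (G_nonneg α p)]
    set x := p.1 with hxdef
    set y := p.2 with hydef
    have hxN : x ≤ ‖p‖ := by
      rw [Prod.norm_def]
      exact le_trans (le_abs_self x) (le_max_left _ _)
    have hyN : |y| ≤ ‖p‖ := by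
      rw [Prod.norm_def]
      exact le_max_right _ _
    set N := ‖p‖ with hNdef
    have hN2 : (2:ℝ) < N := lt_of_lt_of_le hx hxN
    have hN0 : (0:ℝ) < N := by linarith
    have hsum : N ^ 2 ≤ x ^ 2 + y ^ 2 := by
      have h1 : N = max |x| |y| := by
        rw [hNdef, Prod.norm_def, Real.norm_eq_abs, Real.norm_eq_abs]
      rcases le_total |x| |y| with h | h
      · rw [h1, max_eq_right h]; nlinarith [sq_abs y, sq_nonneg x]
      · rw [h1, max_eq_left h]; nlinarith [sq_abs x, sq_nonneg y]
    have hb1 : N * 2⁻¹ ≤ Real.sqrt ((1 - x) ^ 2 + y ^ 2) := by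
      have h1 : (N * 2⁻¹) ^ 2 ≤ (1 - x) ^ 2 + y ^ 2 := by nlinarith
      calc N * 2⁻¹ = Real.sqrt ((N * 2⁻¹) ^ 2) := (Real.sqrt_sq (by positivity)).symm
        _ ≤ _ := Real.sqrt_le_sqrt h1
    have hb2 : N ≤ Real.sqrt ((1 + x) ^ 2 + y ^ 2) := by
      calc N = Real.sqrt (N ^ 2) := (Real.sqrt_sq hN0.le).symm
        _ ≤ _ := Real.sqrt_le_sqrt (by nlinarith)
    have haKey : (Real.sqrt x)⁻¹ ≤ 1 := by
      rw [inv_le_one_iff₀]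
      right
      have h := Real.sqrt_le_sqrt (show (1:ℝ) ≤ x by linarith)
      rwa [Real.sqrt_one] at h
    have hkey1 : ((Real.sqrt ((1 - x) ^ 2 + y ^ 2)) ^ (1 + α))⁻¹
        ≤ (N ^ (1 + α))⁻¹ * (2:ℝ) ^ (1 + α) := by
      calc ((Real.sqrt ((1 - x) ^ 2 + y ^ 2)) ^ (1 + α))⁻¹
          ≤ ((N * 2⁻¹) ^ (1 + α))⁻¹ := inv_rpow_le_inv (by positivity) hb1 (by linarith)
        _ = (N ^ (1 + α))⁻¹ * (2:ℝ) ^ (1 + α) := by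
            rw [Real.mul_rpow hN0.le (by norm_num),
              Real.inv_rpow (by norm_num : (0:ℝ) ≤ 2), mul_inv, inv_inv]
    have hkey2 : (Real.sqrt ((1 + x) ^ 2 + y ^ 2))⁻¹ ≤ N⁻¹ := inv_anti₀ hN0 hb2
    have hNsum : N ^ (1 + α) * N = N ^ (2 + α) := by
      nth_rewrite 2 [← Real.rpow_one N]
      rw [← Real.rpow_add hN0]
      ring_nf
    have hlast : (N ^ (2 + α))⁻¹ ≤ (3/2 : ℝ) ^ (2 + α) * (1 + N) ^ (-(2 + α)) := by
      have h1N : 1 + N ≤ (3/2 : ℝ) * N := by linarith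
      have h2 : (1 + N) ^ (2 + α) ≤ (3/2 : ℝ) ^ (2 + α) * N ^ (2 + α) := by
        rw [← Real.mul_rpow (by norm_num) hN0.le]
        exact Real.rpow_le_rpow (by linarith) h1N (by linarith)
      have h4 : ((3/2 : ℝ) ^ (2 + α) * N ^ (2 + α))⁻¹ ≤ ((1 + N) ^ (2 + α))⁻¹ :=
        inv_anti₀ (Real.rpow_pos_of_pos (by linarith) _) h2
      have hpow : (0:ℝ) < (3/2 : ℝ) ^ (2 + α) := Real.rpow_pos_of_pos (by norm_num) _
      have h5 : (N ^ (2 + α))⁻¹ = (3/2 : ℝ) ^ (2 + α) * ((3/2 : ℝ) ^ (2 + α) * N ^ (2 + α))⁻¹ := by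
        rw [mul_inv, ← mul_assoc, mul_inv_cancel₀ hpow.ne', one_mul]
      rw [h5, Real.rpow_neg (by linarith : (0:ℝ) ≤ 1 + N)]
      exact mul_le_mul_of_nonneg_left h4 (by positivity)
    calc G α p
        ≤ 1 * ((N ^ (1 + α))⁻¹ * (2:ℝ) ^ (1 + α)) * N⁻¹ := by
          unfold G
          simp only [← hxdef, ← hydef]
          gcongr <;> positivity
      _ = (2:ℝ) ^ (1 + α) * (N ^ (1 + α) * N)⁻¹ := by rw [mul_inv]; ring
      _ = (2:ℝ) ^ (1 + α) * (N ^ (2 + α))⁻¹ := by rw [hNsum]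
      _ ≤ (2:ℝ) ^ (1 + α) * ((3/2 : ℝ) ^ (2 + α) * (1 + N) ^ (-(2 + α))) := by
          exact mul_le_mul_of_nonneg_left hlast (by positivity)
      _ = ((2:ℝ) ^ (1 + α) * (3/2 : ℝ) ^ (2 + α)) * (1 + N) ^ (-(2 + α)) := by ring
  have cover : {p : ℝ × ℝ | 0 < p.1} ⊆ (Ioc (0:ℝ) (1/2) ×ˢ (univ : Set ℝ))
      ∪ ((Ioc (1/2:ℝ) 2 ×ˢ (univ : Set ℝ)) ∪ {p : ℝ × ℝ | 2 < p.1}) := by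
    rintro p hp
    rcases le_or_gt p.1 (1/2) with h | h
    · exact Or.inl ⟨⟨hp, h⟩, mem_univ _⟩
    · rcases le_or_gt p.1 2 with h2 | h2
      · exact Or.inr (Or.inl ⟨⟨h, h2⟩, mem_univ _⟩)
      · exact Or.inr (Or.inr h2)
  exact (hA.union (hB.union hC)).mono_set cover


end WeightedAux

/-- **Finiteness of the weighted `L²` model integral** (used in Lemma 2.3):
`∫_{z₁ > 0} z₁^{−1/2} |(1−z₁,z₂)|^{−(1+α)} |(1+z₁,z₂)|^{−1} dz < ∞`. -/
theorem weighted_L2_model_integral_finite (α : ℝ) (hα0 : 0 < α) (hα1 : α < 1) :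
    IntegrableOn
      (fun z : Pt =>
        (Real.sqrt (z 0))⁻¹ * (‖mk2 (1 - z 0) (z 1)‖ ^ (1 + α))⁻¹
          * ‖mk2 (1 + z 0) (z 1)‖⁻¹)
      {z : Pt | 0 < z 0} volume := by
  have key := WeightedAux.G_integrable α hα0 hα1
  have norm_mk2 : ∀ a b : ℝ, ‖mk2 a b‖ = Real.sqrt (a ^ 2 + b ^ 2) := by
    intro a b
    rw [mk2, EuclideanSpace.norm_eq]
    simp [Fin.sum_univ_two, sq_abs]
  set e : Pt ≃ᵐ (ℝ × ℝ) :=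
    (MeasurableEquiv.toLp 2 (Fin 2 → ℝ)).symm.trans (MeasurableEquiv.piFinTwo fun _ => ℝ) with he
  have hmp : MeasurePreserving e volume volume :=
    (volume_preserving_piFinTwo fun _ => ℝ).comp
      (EuclideanSpace.volume_preserving_symm_measurableEquiv_toLp (Fin 2))
  have h := (hmp.integrableOn_comp_preimage e.measurableEmbedding).mpr key
  have hset : e ⁻¹' {p : ℝ × ℝ | 0 < p.1} = {z : Pt | 0 < z 0} := rfl
  have hfun : (WeightedAux.G α ∘ e) = fun z : Pt =>
      (Real.sqrt (z 0))⁻¹ * (‖mk2 (1 - z 0) (z 1)‖ ^ (1 + α))⁻¹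
          * ‖mk2 (1 + z 0) (z 1)‖⁻¹ := by
    funext z
    simp only [Function.comp_apply, WeightedAux.G, norm_mk2]
    rfl
  rwa [hset, hfun] at h
end
end

section
/- Let α ∈ (0,1) and let θ : closure of ℝ²₊ → ℝ be continuous with supp θ ⊂ B(0;1) and ‖∂₂θ‖_{L^∞} < ∞. Define U₂(x) := −(2/α)∫_ℝ θ(0,y₂)|x−(0,y₂)|^{−α} dy₂. Then for every x ∈ ℝ²₊ the change of variables y₂ = x₂ + z x₁ yields the identity ∂₁U₂(x) = 2∫_ℝ x₁ θ(0,y₂) |x−(0,y₂)|^{−(α+2)} dy₂ = 2 x₁^{−α} ∫_ℝ θ(0, x₂ + z x₁) (1+z²)^{−(α/2+1)} dz, and the remainder satisfies |2 x₁^{−α} ∫_ℝ (θ(0, x₂ + z x₁) − θ(0, x₂)) (1+z²)^{−(α/2+1)} dz| ≤ C x₁^{1−α} ‖∂₂θ‖_{L^∞} with C depending only on α. -/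
noncomputable section

open MeasureTheory Real Set ENNReal NNReal

set_option synthInstance.maxHeartbeats 1000000
set_option maxHeartbeats 1000000

/-- The boundary contribution `U₂(x) = −(2/α) ∫_ℝ θ(0,y₂) |x−(0,y₂)|^{−α} dy₂`. -/
def U2 (α : ℝ) (θ : Pt → ℝ) (x : Pt) : ℝ :=
  -(2 / α) * ∫ y₂ : ℝ, θ (mk2 0 y₂) * (‖x - mk2 0 y₂‖ ^ α)⁻¹

variable {E : Type*} [NormedAddCommGroup E] [InnerProductSpace ℝ E]

lemma mk2_cont : Continuous fun y : ℝ => mk2 0 y := by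
  have : (fun y : ℝ => mk2 0 y) = fun y : ℝ => y • mk2 0 1 := by
    funext y; ext i; fin_cases i <;> simp [mk2]
  rw [this]
  exact continuous_id.smul continuous_const

lemma norm_mk2_s19 (y : ℝ) : ‖mk2 0 y‖ = |y| := by
  rw [EuclideanSpace.norm_eq]
  simp [mk2, Fin.sum_univ_two, Real.sqrt_sq_eq_abs]

lemma normsq_sub (x : Pt) (y : ℝ) : ‖x - mk2 0 y‖^2 = (x 0)^2 + (x 1 - y)^2 := by
  rw [EuclideanSpace.norm_eq]
  rw [Real.sq_sqrt (by positivity)]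
  simp [mk2, Fin.sum_univ_two, sq_abs]

lemma apply0_le_norm (v : Pt) : v 0 ≤ ‖v‖ := by
  have := abs_real_inner_le_norm (EuclideanSpace.single 0 (1:ℝ)) v
  simp only [EuclideanSpace.inner_single_left, EuclideanSpace.norm_single] at this
  calc v 0 ≤ |v 0| := le_abs_self _
  _ ≤ _ := by simpa using this

variable {E : Type*} [NormedAddCommGroup E] [InnerProductSpace ℝ E]

lemma sq_rpow_eq (β : ℝ) (v : E) : ((‖v‖ ^ 2 : ℝ)) ^ β = ‖v‖ ^ (2 * β) := by
  rw [← Real.rpow_natCast ‖v‖ 2, ← Real.rpow_mul (norm_nonneg _)]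
  norm_num

lemma rpow_inv_eq (α : ℝ) (hα : α ≠ 0) (v : E) :
    (‖v‖ ^ α)⁻¹ = ((‖v‖ ^ 2 : ℝ)) ^ (-(α/2)) := by
  rw [sq_rpow_eq]
  rw [← Real.rpow_neg (norm_nonneg _)]
  congr 1
  ring

lemma key_deriv (α : ℝ) (hα : α ≠ 0) (c : ℝ) (p x : E) (hx : ‖x - p‖ ≠ 0) :
    HasFDerivAt (fun x : E => c * (‖x - p‖ ^ α)⁻¹)
      ((c * (-α) * ‖x - p‖ ^ (-(α+2))) • innerSL ℝ (x - p)) x := by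
  have h1 : HasFDerivAt (fun x : E => x - p) (ContinuousLinearMap.id ℝ E) x :=
    (hasFDerivAt_id x).sub_const p
  have h2 := h1.norm_sq
  have h3 : HasDerivAt (fun t : ℝ => t ^ (-(α/2))) (-(α/2) * (‖x-p‖^2 : ℝ) ^ (-(α/2) - 1)) ((‖x - p‖^2 : ℝ)) :=
    Real.hasDerivAt_rpow_const (Or.inl (pow_ne_zero 2 hx))
  have h4 := (h3.comp_hasFDerivAt x h2).const_mul c
  convert h4 using 1
  · rfl
  · rfl
  · funext z
    rw [rpow_inv_eq α hα]
    rfl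
  · ext w
    simp only [ContinuousLinearMap.smul_apply, innerSL_apply_apply, ContinuousLinearMap.coe_smul',
      Pi.smul_apply, ContinuousLinearMap.coe_comp', Function.comp_apply,
      ContinuousLinearMap.coe_id', id_eq, smul_eq_mul]
    have hsq : ((‖x - p‖^2:ℝ)) ^ (-(α/2) - 1) = ‖x - p‖ ^ (-(α+2)) := by
      rw [sq_rpow_eq]; ring_nf
    rw [hsq]; ring

lemma rpow_of_sq {t : ℝ} (ht : 0 ≤ t) (β : ℝ) : ((t ^ 2 : ℝ)) ^ β = t ^ (2 * β) := by
  rw [← Real.rpow_natCast t 2, ← Real.rpow_mul ht]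
  norm_num

lemma aux_bound (α : ℝ) (hα0 : 0 < α) (z : ℝ) :
    |z| * ((1+z^2)^(α/2+1))⁻¹ ≤ 2^((α+2)/2) * ((1+|z|)^(α+1))⁻¹ := by
  have h1 : (0:ℝ) < 1 + |z| := by positivity
  have h2 : (0:ℝ) < 1 + z^2 := by positivity
  have key : (1+|z|)^(α+2) ≤ 2^((α+2)/2) * (1+z^2)^(α/2+1) := by
    have hsq : (1+|z|)^2 ≤ 2*(1+z^2) := by nlinarith [sq_nonneg (1 - |z|), sq_abs z]
    calc (1+|z|)^(α+2) = ((1+|z|)^2 : ℝ)^((α+2)/2) := by rw [rpow_of_sq h1.le]; ring_nf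
    _ ≤ (2*(1+z^2))^((α+2)/2) := Real.rpow_le_rpow (by positivity) hsq (by positivity)
    _ = 2^((α+2)/2) * (1+z^2)^((α+2)/2) := Real.mul_rpow (by norm_num) (by positivity)
    _ = 2^((α+2)/2) * (1+z^2)^(α/2+1) := by ring_nf
  rw [← div_eq_mul_inv, ← div_eq_mul_inv, div_le_div_iff₀ (by positivity) (by positivity)]
  calc |z| * (1+|z|)^(α+1) ≤ (1+|z|) * (1+|z|)^(α+1) := by
        have : |z| ≤ 1 + |z| := by linarith
        gcongr
  _ = (1+|z|)^(α+2) := by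
        rw [← Real.rpow_one_add' h1.le (by positivity : (1:ℝ)+(α+1) ≠ 0)]
        ring_nf
  _ ≤ 2^((α+2)/2) * (1+z^2)^(α/2+1) := key

lemma part1 (α : ℝ) (hα0 : 0 < α) (θ : Pt → ℝ) (hθc : Continuous θ)
    (hgs : ∀ y : ℝ, 1 ≤ |y| → θ (mk2 0 y) = 0) (x : Pt) (hx : 0 < x 0) :
    pd 0 (U2 α θ) x = 2 * ∫ y₂ : ℝ, x 0 * θ (mk2 0 y₂) * (‖x - mk2 0 y₂‖ ^ (α + 2))⁻¹ := by
  set g : ℝ → ℝ := fun y => θ (mk2 0 y) with hg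
  have hgc : Continuous g := hθc.comp mk2_cont
  have hgcs : HasCompactSupport g := by
    apply HasCompactSupport.intro (isCompact_Icc (a := (-1:ℝ)) (b := 1))
    intro y hy
    apply hgs
    rcases abs_cases y with ⟨h, _⟩ | ⟨h, _⟩ <;> rw [h] <;>
      simp only [Set.mem_Icc, not_and_or, not_le] at hy <;> rcases hy with h' | h' <;> linarith
  have hgint : Integrable g := hgc.integrable_of_hasCompactSupport hgcs
  have hrge : ∀ (x' : Pt) (y : ℝ), x' 0 ≤ ‖x' - mk2 0 y‖ := by
    intro x' y
    have := apply0_le_norm (x' - mk2 0 y)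
    simpa [mk2] using this
  -- the parametric-derivative family
  set Fd : Pt → ℝ → (Pt →L[ℝ] ℝ) := fun x' y =>
    ((g y * -α * ‖x' - mk2 0 y‖ ^ (-(α+2)))) • innerSL ℝ (x' - mk2 0 y) with hFd
  have hrpos : ∀ (x' : Pt), 0 < x' 0 → ∀ (y : ℝ), 0 < ‖x' - mk2 0 y‖ := fun x' h y =>
    lt_of_lt_of_le h (hrge x' y)
  have hmeasF : ∀ x' : Pt, 0 < x' 0 →
      AEStronglyMeasurable (fun y => g y * (‖x' - mk2 0 y‖ ^ α)⁻¹) volume := by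
    intro x' hx'
    apply Continuous.aestronglyMeasurable
    apply hgc.mul
    apply Continuous.inv₀
    · exact (continuous_const.sub mk2_cont).norm.rpow_const fun y => Or.inr hα0.le
    · exact fun y => (Real.rpow_pos_of_pos (hrpos x' hx' y) α).ne'
  have hball : ∀ x' ∈ Metric.ball x (x 0 / 2), x 0 / 2 < x' 0 := by
    intro x' hx'
    have h1 : |x' 0 - x 0| ≤ ‖x' - x‖ := by
      have := apply0_le_norm (x' - x)
      have := apply0_le_norm (x - x')
      rcases abs_cases (x' 0 - x 0) with ⟨h, _⟩ | ⟨h, _⟩ <;> rw [h]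
      · simpa [mk2] using apply0_le_norm (x' - x)
      · have := apply0_le_norm (x - x')
        rw [norm_sub_rev]
        simpa [mk2, neg_sub] using this
    have h2 : ‖x' - x‖ < x 0 / 2 := by
      rw [← dist_eq_norm]
      exact Metric.mem_ball.mp hx'
    have := abs_lt.mp (lt_of_le_of_lt h1 h2)
    linarith [this.1]
  have hbound : ∀ (y : ℝ), ∀ x' ∈ Metric.ball x (x 0 / 2),
      ‖Fd x' y‖ ≤ (α * (x 0 / 2) ^ (-(α+1))) * |g y| := by
    intro y x' hx'
    have hx'0 : 0 < x' 0 := lt_trans (half_pos hx) (hball x' hx')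
    have hr : 0 < ‖x' - mk2 0 y‖ := hrpos x' hx'0 y
    rw [hFd]
    beta_reduce
    have hns := norm_smul (α := ℝ) (g y * -α * ‖x' - mk2 0 y‖ ^ (-(α+2)))
      (innerSL ℝ (x' - mk2 0 y))
    rw [hns, innerSL_apply_norm]
    rw [Real.norm_eq_abs, abs_mul, abs_mul, abs_neg, abs_of_pos hα0,
      abs_of_nonneg (Real.rpow_nonneg (norm_nonneg _) _)]
    have hstep : ‖x' - mk2 0 y‖ ^ (-(α+2)) * ‖x' - mk2 0 y‖ = ‖x' - mk2 0 y‖ ^ (-(α+1)) := by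
      have h2 : ‖x' - mk2 0 y‖ ^ (-(α+1)) = ‖x' - mk2 0 y‖ ^ (-(α+2)) * ‖x' - mk2 0 y‖ ^ (1:ℝ) := by
        rw [← Real.rpow_add hr]; congr 1; ring
      rw [h2, Real.rpow_one]
    calc |g y| * α * ‖x' - mk2 0 y‖ ^ (-(α+2)) * ‖x' - mk2 0 y‖
        = (α * ‖x' - mk2 0 y‖ ^ (-(α+1))) * |g y| := by rw [mul_assoc, hstep]; ring
      _ ≤ (α * (x 0 / 2) ^ (-(α+1))) * |g y| := by
          have hmono : ‖x' - mk2 0 y‖ ^ (-(α+1)) ≤ (x 0 / 2) ^ (-(α+1)) := by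
            rw [Real.rpow_neg (norm_nonneg _), Real.rpow_neg (by positivity)]
            exact inv_anti₀ (Real.rpow_pos_of_pos (half_pos hx) _)
              (Real.rpow_le_rpow (by positivity) ((hball x' hx').le.trans (hrge x' y))
                (by positivity))
          exact mul_le_mul_of_nonneg_right (mul_le_mul_of_nonneg_left hmono hα0.le)
            (abs_nonneg (g y))
  -- the main dominated-derivative step
  have hmain : HasFDerivAt (fun x' : Pt => ∫ y : ℝ, g y * (‖x' - mk2 0 y‖ ^ α)⁻¹)
      (∫ y : ℝ, Fd x y) x := by
    apply hasFDerivAt_integral_of_dominated_of_fderiv_le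
      (hs := Metric.ball_mem_nhds x (half_pos hx)) (bound := fun y => (α * (x 0 / 2) ^ (-(α+1))) * |g y|)
    · filter_upwards [IsOpen.mem_nhds
        (isOpen_lt continuous_const (EuclideanSpace.proj (0 : Fin 2)).continuous) hx] with x' hx'
      exact hmeasF x' hx'
    · apply (hgint.abs.const_mul ((x 0 ^ α)⁻¹)).mono' (hmeasF x hx)
      filter_upwards with y
      have h1 : (‖x - mk2 0 y‖ ^ α)⁻¹ ≤ ((x 0) ^ α)⁻¹ :=
        inv_anti₀ (Real.rpow_pos_of_pos hx α)
          (Real.rpow_le_rpow hx.le (hrge x _) hα0.le)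
      calc ‖g y * (‖x - mk2 0 y‖ ^ α)⁻¹‖ = |g y| * (‖x - mk2 0 y‖ ^ α)⁻¹ := by
            rw [norm_mul, Real.norm_eq_abs, Real.norm_eq_abs,
              abs_of_nonneg (show (0:ℝ) ≤ (‖x - mk2 0 y‖ ^ α)⁻¹ by positivity)]
      _ ≤ |g y| * ((x 0) ^ α)⁻¹ := mul_le_mul_of_nonneg_left h1 (abs_nonneg _)
      _ = ((x 0) ^ α)⁻¹ * |g y| := mul_comm _ _
    · -- measurability of Fd x
      apply Continuous.aestronglyMeasurable
      apply Continuous.smul (f := fun y => g y * -α * ‖x - mk2 0 y‖ ^ (-(α+2)))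
        (g := fun y => innerSL ℝ (x - mk2 0 y))
      · apply Continuous.mul
        · exact hgc.mul continuous_const
        · exact (continuous_const.sub mk2_cont).norm.rpow_const
            fun y => Or.inl (hrpos x hx y).ne'
      · exact (innerSL ℝ).continuous.comp (continuous_const.sub mk2_cont)
    · filter_upwards with y
      exact hbound y
    · exact hgint.abs.const_mul _
    · filter_upwards with y
      intro x' hx'
      have hx'0 : 0 < x' 0 := lt_trans (half_pos hx) (hball x' hx')
      exact key_deriv α hα0.ne' (g y) (mk2 0 y) x' (hrpos x' hx'0 y).ne'
  have hFdint : Integrable (Fd x) volume := by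
    apply (hgint.abs.const_mul (α * (x 0 / 2) ^ (-(α+1)))).mono'
    · apply Continuous.aestronglyMeasurable
      apply Continuous.smul (f := fun y => g y * -α * ‖x - mk2 0 y‖ ^ (-(α+2)))
        (g := fun y => innerSL ℝ (x - mk2 0 y))
      · apply Continuous.mul
        · exact hgc.mul continuous_const
        · exact (continuous_const.sub mk2_cont).norm.rpow_const
            fun y => Or.inl (hrpos x hx y).ne'
      · exact (innerSL ℝ).continuous.comp (continuous_const.sub mk2_cont)
    · filter_upwards with y
      exact hbound y x (Metric.mem_ball_self (half_pos hx))
  have hU : HasFDerivAt (U2 α θ) ((-(2/α)) • ∫ y : ℝ, Fd x y) x := hmain.const_mul (-(2/α))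
  rw [pd, hU.fderiv, ContinuousLinearMap.smul_apply,
    ContinuousLinearMap.integral_apply hFdint, smul_eq_mul, ← integral_const_mul,
    ← integral_const_mul]
  apply integral_congr_ae
  filter_upwards with y
  have hrne : (0:ℝ) < ‖x - mk2 0 y‖ := hrpos x hx y
  rw [hFd]
  beta_reduce
  rw [ContinuousLinearMap.smul_apply, innerSL_apply_apply, smul_eq_mul]
  have hinner : (inner ℝ (x - mk2 0 y) (EuclideanSpace.single 0 (1:ℝ)) : ℝ) = x 0 := by
    simp [EuclideanSpace.inner_single_right, mk2]
  rw [hinner, Real.rpow_neg (norm_nonneg _)]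
  field_simp
  ring

lemma part2 (α : ℝ) (hα0 : 0 < α) (θ : Pt → ℝ) (x : Pt) (hx : 0 < x 0) :
    ∫ y₂ : ℝ, x 0 * θ (mk2 0 y₂) * (‖x - mk2 0 y₂‖ ^ (α + 2))⁻¹
      = ((x 0) ^ α)⁻¹ * ∫ z : ℝ, θ (mk2 0 (x 1 + z * x 0)) * ((1 + z ^ 2) ^ (α / 2 + 1))⁻¹ := by
  set h : ℝ → ℝ := fun y => x 0 * θ (mk2 0 y) * (((x 0)^2 + (x 1 - y)^2) ^ (α/2 + 1))⁻¹ with hh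
  have hnorm : ∀ y : ℝ, ‖x - mk2 0 y‖ ^ (α + 2) = ((x 0)^2 + (x 1 - y)^2) ^ (α/2 + 1) := by
    intro y
    rw [← normsq_sub, rpow_of_sq (norm_nonneg _)]
    congr 1
    ring
  have e1 : ∫ y₂ : ℝ, x 0 * θ (mk2 0 y₂) * (‖x - mk2 0 y₂‖ ^ (α + 2))⁻¹ = ∫ y, h y := by
    congr 1 with y
    rw [hnorm y]
  have e2 : ∫ z : ℝ, h (x 0 * z + x 1) = |(x 0)⁻¹| • ∫ t : ℝ, h (t + x 1) := by
    exact MeasureTheory.Measure.integral_comp_mul_left (fun t => h (t + x 1)) (x 0)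
  have e3 : ∫ t : ℝ, h (t + x 1) = ∫ y, h y := by
    exact MeasureTheory.integral_add_right_eq_self h (x 1)
  have e4 : ∫ y, h y = x 0 * ∫ z : ℝ, h (x 0 * z + x 1) := by
    rw [e2, e3, smul_eq_mul, abs_of_pos (inv_pos.mpr hx), ← mul_assoc,
      mul_inv_cancel₀ hx.ne', one_mul]
  have e5 : ∀ z : ℝ, h (x 0 * z + x 1) =
      (x 0 * ((x 0) ^ (α + 2))⁻¹) * (θ (mk2 0 (x 1 + z * x 0)) * ((1 + z ^ 2) ^ (α/2 + 1))⁻¹) := by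
    intro z
    rw [hh]
    beta_reduce
    have harg : (x 0)^2 + (x 1 - (x 0 * z + x 1))^2 = (x 0)^2 * (1 + z^2) := by ring
    rw [harg, Real.mul_rpow (by positivity) (by positivity), rpow_of_sq hx.le,
      show (2 : ℝ) * (α/2 + 1) = α + 2 by ring, mul_inv]
    have : x 0 * z + x 1 = x 1 + z * x 0 := by ring
    rw [this]
    ring
  have e6 : ∫ z : ℝ, h (x 0 * z + x 1)
      = (x 0 * ((x 0) ^ (α + 2))⁻¹) * ∫ z : ℝ, θ (mk2 0 (x 1 + z * x 0)) * ((1 + z ^ 2) ^ (α/2 + 1))⁻¹ := by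
    rw [← integral_const_mul]
    apply integral_congr_ae
    filter_upwards with z
    exact e5 z
  have hxx : x 0 * (x 0 * ((x 0) ^ (α + 2))⁻¹) = ((x 0) ^ α)⁻¹ := by
    have h7 : (x 0) ^ (α + 2) = (x 0) ^ α * (x 0)^2 := by
      rw [Real.rpow_add hx]
      congr 1
      rw [← Real.rpow_natCast (x 0) 2]
      norm_num
    rw [h7, mul_inv]
    field_simp
  rw [e1, e4, e6, ← mul_assoc, hxx]

lemma part3 (α : ℝ) (hα0 : 0 < α) (θ : Pt → ℝ) (D : ℝ) (hD : 0 ≤ D)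
    (hdiff : ∀ s : ℝ, DifferentiableAt ℝ (fun r => θ (mk2 0 r)) s)
    (hbnd : ∀ s : ℝ, |deriv (fun r => θ (mk2 0 r)) s| ≤ D)
    (x : Pt) (hx : 0 < x 0) :
    |2 * ((x 0) ^ α)⁻¹
        * ∫ z : ℝ, (θ (mk2 0 (x 1 + z * x 0)) - θ (mk2 0 (x 1))) * ((1 + z ^ 2) ^ (α / 2 + 1))⁻¹|
      ≤ (2 * 2 ^ ((α+2)/2) * (∫ z : ℝ, ((1 + |z|) ^ (α+1))⁻¹) + 1) * (x 0) ^ (1 - α) * D := by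
  set g : ℝ → ℝ := fun r => θ (mk2 0 r) with hg
  set K : ℝ := ∫ z : ℝ, ((1 + |z|) ^ (α+1))⁻¹ with hK
  have hlip : ∀ a b : ℝ, |g b - g a| ≤ D * |b - a| := by
    intro a b
    have := Convex.norm_image_sub_le_of_norm_deriv_le (𝕜 := ℝ) (f := g) (s := Set.univ)
      (fun s _ => hdiff s) (fun s _ => by rw [Real.norm_eq_abs]; exact hbnd s)
      convex_univ (Set.mem_univ a) (Set.mem_univ b)
    simpa [Real.norm_eq_abs] using this
  have hintb : Integrable (fun z : ℝ => ((1 + |z|) ^ (α+1))⁻¹) := by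
    have := integrable_one_add_norm (E := ℝ) (μ := volume) (r := α+1) (by simp; linarith)
    apply this.congr
    filter_upwards with z
    rw [Real.rpow_neg (by positivity), Real.norm_eq_abs]
  have hKnn : 0 ≤ K := integral_nonneg fun z => by positivity
  have hIb : ‖∫ z : ℝ, (g (x 1 + z * x 0) - g (x 1)) * ((1 + z ^ 2) ^ (α / 2 + 1))⁻¹‖
      ≤ ∫ z : ℝ, (D * x 0 * 2 ^ ((α+2)/2)) * ((1 + |z|) ^ (α+1))⁻¹ := by
    apply norm_integral_le_of_norm_le (hintb.const_mul _)
    filter_upwards with z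
    have hw : (0:ℝ) ≤ ((1 + z ^ 2) ^ (α / 2 + 1))⁻¹ := by positivity
    calc ‖(g (x 1 + z * x 0) - g (x 1)) * ((1 + z ^ 2) ^ (α / 2 + 1))⁻¹‖
        = |g (x 1 + z * x 0) - g (x 1)| * ((1 + z ^ 2) ^ (α / 2 + 1))⁻¹ := by
          rw [Real.norm_eq_abs, abs_mul, abs_of_nonneg hw]
      _ ≤ (D * |z * x 0|) * ((1 + z ^ 2) ^ (α / 2 + 1))⁻¹ := by
          apply mul_le_mul_of_nonneg_right _ hw
          have := hlip (x 1) (x 1 + z * x 0)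
          simpa using this
      _ = (D * x 0) * (|z| * ((1 + z ^ 2) ^ (α / 2 + 1))⁻¹) := by
          rw [abs_mul, abs_of_pos hx]
          ring
      _ ≤ (D * x 0) * (2 ^ ((α+2)/2) * ((1 + |z|) ^ (α+1))⁻¹) :=
          mul_le_mul_of_nonneg_left (aux_bound α hα0 z) (by positivity)
      _ = (D * x 0 * 2 ^ ((α+2)/2)) * ((1 + |z|) ^ (α+1))⁻¹ := by ring
  rw [integral_const_mul] at hIb
  have hpow : (x 0) ^ ((1:ℝ) - α) = x 0 * ((x 0) ^ α)⁻¹ := by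
    rw [Real.rpow_sub hx, Real.rpow_one, div_eq_mul_inv]
  have habs : |2 * ((x 0) ^ α)⁻¹
      * ∫ z : ℝ, (g (x 1 + z * x 0) - g (x 1)) * ((1 + z ^ 2) ^ (α / 2 + 1))⁻¹|
      = 2 * ((x 0) ^ α)⁻¹
        * ‖∫ z : ℝ, (g (x 1 + z * x 0) - g (x 1)) * ((1 + z ^ 2) ^ (α / 2 + 1))⁻¹‖ := by
    rw [Real.norm_eq_abs, abs_mul, abs_mul]
    congr 2
    · norm_num
    · exact abs_of_nonneg (by positivity)
  rw [habs]
  have hxa : (0:ℝ) < ((x 0) ^ α)⁻¹ := by positivity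
  calc 2 * ((x 0) ^ α)⁻¹
        * ‖∫ z : ℝ, (g (x 1 + z * x 0) - g (x 1)) * ((1 + z ^ 2) ^ (α / 2 + 1))⁻¹‖
      ≤ 2 * ((x 0) ^ α)⁻¹ * (D * x 0 * 2 ^ ((α+2)/2) * K) := by
        apply mul_le_mul_of_nonneg_left hIb (by positivity)
    _ = (2 * 2 ^ ((α+2)/2) * K) * ((x 0) ^ (1 - α)) * D := by
        rw [hpow]; ring
    _ ≤ (2 * 2 ^ ((α+2)/2) * K + 1) * (x 0) ^ (1 - α) * D := by
        have h1 : (0:ℝ) ≤ (x 0) ^ ((1:ℝ) - α) * D := by positivity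
        nlinarith


/-- **Identity and remainder bound for `∂₁U₂`** (from the proof of Lemma 2.1): for
continuous `θ` supported in `B(0;1)` whose boundary trace has derivative bounded by `D`,
`∂₁U₂(x) = 2∫_ℝ x₁ θ(0,y₂) |x−(0,y₂)|^{−(α+2)} dy₂
        = 2 x₁^{−α} ∫_ℝ θ(0, x₂+z x₁) (1+z²)^{−(α/2+1)} dz`,
and the remainder after extracting `C_α x₁^{−α} θ(0,x₂)` is at most
`C x₁^{1−α} ‖∂₂θ‖_{L^∞}` with `C = C(α)`. -/
theorem U2_derivative_identity_and_remainder (α : ℝ) (hα0 : 0 < α) (hα1 : α < 1) :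
    ∃ C : ℝ, 0 < C ∧
      ∀ (θ : Pt → ℝ) (D : ℝ), 0 ≤ D →
        Continuous θ →
        closedHalfPlane ∩ Function.support θ ⊆ Metric.ball 0 1 →
        (∀ s : ℝ, DifferentiableAt ℝ (fun r => θ (mk2 0 r)) s) →
        (∀ s : ℝ, |deriv (fun r => θ (mk2 0 r)) s| ≤ D) →
        ∀ x ∈ halfPlane,
          pd 0 (U2 α θ) x
              = 2 * ∫ y₂ : ℝ, x 0 * θ (mk2 0 y₂) * (‖x - mk2 0 y₂‖ ^ (α + 2))⁻¹ ∧
          pd 0 (U2 α θ) x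
              = 2 * ((x 0) ^ α)⁻¹
                  * ∫ z : ℝ, θ (mk2 0 (x 1 + z * x 0)) * ((1 + z ^ 2) ^ (α / 2 + 1))⁻¹ ∧
          |2 * ((x 0) ^ α)⁻¹
              * ∫ z : ℝ,
                  (θ (mk2 0 (x 1 + z * x 0)) - θ (mk2 0 (x 1)))
                    * ((1 + z ^ 2) ^ (α / 2 + 1))⁻¹|
            ≤ C * (x 0) ^ (1 - α) * D := by
  refine ⟨2 * 2 ^ ((α+2)/2) * (∫ z : ℝ, ((1 + |z|) ^ (α+1))⁻¹) + 1, ?_, ?_⟩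
  · have hKnn : (0:ℝ) ≤ ∫ z : ℝ, ((1 + |z|) ^ (α+1))⁻¹ :=
      integral_nonneg fun z => by positivity
    have h2s : (0:ℝ) < 2 ^ ((α+2)/2) := Real.rpow_pos_of_pos two_pos _
    nlinarith
  · intro θ D hD hθc hsupp hdiff hbnd x hx
    have hx0 : 0 < x 0 := hx
    have hgs : ∀ y : ℝ, 1 ≤ |y| → θ (mk2 0 y) = 0 := by
      intro y hy
      by_contra h
      have hmem : mk2 0 y ∈ closedHalfPlane ∩ Function.support θ :=
        ⟨by norm_num [closedHalfPlane, mk2], h⟩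
      have := hsupp hmem
      rw [mem_ball_zero_iff, norm_mk2_s19] at this
      linarith
    have h1 := part1 α hα0 θ hθc hgs x hx0
    have h2 := part2 α hα0 θ x hx0
    exact ⟨h1, by rw [h1, h2, mul_assoc], part3 α hα0 θ D hD hdiff hbnd x hx0⟩
end
end
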